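/- arXiv:1810.04004 — 8 statements merged into one kernel-verified Lean document; each statement's English description precedes it below -/
import Mathlib

section
/- For integers 3 ≤ n ≤ m, the strong geodetic number of the complete bipartite graph K_{n,m} equals the minimum over integers k with 0 ≤ k ≤ n of s(k) = max{F(k), G(k)}, i.e. sg(K_{n,m}) = min{ max{k + f(k), k + g(k)} : 0 ≤ k ≤ n, k ∈ ℤ }. -/
open SimpleGraph

/-- A set `S` of vertices is a strong geodetic set of `G` if one can fix, for each
pair of vertices of `S`, a single geodesic (shortest path) between them, so that
every vertex of the graph lies on one of the chosen geodesics. -/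
def IsStrongGeodeticSet {V : Type*} (G : SimpleGraph V) (S : Set V) : Prop :=
  ∃ γ : ∀ u ∈ S, ∀ v ∈ S, G.Walk u v,
    (∀ u (hu : u ∈ S) v (hv : v ∈ S), (γ u hu v hv).length = G.dist u v) ∧
    (∀ u (hu : u ∈ S) v (hv : v ∈ S), γ u hu v hv = (γ v hv u hu).reverse) ∧
    (∀ x : V, ∃ u, ∃ hu : u ∈ S, ∃ v, ∃ hv : v ∈ S, x ∈ (γ u hu v hv).support)

/-- The strong geodetic number of a finite graph: the minimum cardinality of a
strong geodetic set. -/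
noncomputable def strongGeodeticNumber {V : Type*} [Fintype V] (G : SimpleGraph V) : ℕ :=
  sInf {k | ∃ S : Finset V, S.card = k ∧ IsStrongGeodeticSet G ↑S}

/-- `fFun n p = min {q : binom(q,2) ≥ n - p}`. -/
noncomputable def fFun (n : ℕ) (p : ℕ) : ℕ := sInf {q : ℕ | n - p ≤ q.choose 2}

/-- `gFun m p = m - binom(p,2)` (as an integer). -/
def gFun (m : ℕ) (p : ℕ) : ℤ := (m : ℤ) - (p.choose 2 : ℤ)


section helper
open Sum Finset

lemma dist_ll (n m : ℕ) (hm : 0 < m) (a a' : Fin n) (h : a ≠ a') :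
    (completeBipartiteGraph (Fin n) (Fin m)).dist (inl a) (inl a') = 2 := by
  let w : (completeBipartiteGraph (Fin n) (Fin m)).Walk (inl a) (inl a') :=
    Walk.cons (by simp) (Walk.cons (show (completeBipartiteGraph (Fin n) (Fin m)).Adj (inr ⟨0, hm⟩) (inl a') by simp) Walk.nil)
  have h2 : (completeBipartiteGraph (Fin n) (Fin m)).dist (inl a) (inl a') ≤ 2 := dist_le w
  have h0 : (completeBipartiteGraph (Fin n) (Fin m)).dist (inl a) (inl a') ≠ 0 := by
    intro hc
    rw [dist_eq_zero_iff_eq_or_not_reachable] at hc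
    rcases hc with hc | hc
    · exact h (by simpa using hc)
    · exact hc ⟨w⟩
  have h1 : (completeBipartiteGraph (Fin n) (Fin m)).dist (inl a) (inl a') ≠ 1 := by
    intro hc; rw [dist_eq_one_iff_adj] at hc; simp at hc
  omega

lemma dist_rr (n m : ℕ) (hn : 0 < n) (b b' : Fin m) (h : b ≠ b') :
    (completeBipartiteGraph (Fin n) (Fin m)).dist (inr b) (inr b') = 2 := by
  let w : (completeBipartiteGraph (Fin n) (Fin m)).Walk (inr b) (inr b') :=
    Walk.cons (by simp) (Walk.cons (show (completeBipartiteGraph (Fin n) (Fin m)).Adj (inl ⟨0, hn⟩) (inr b') by simp) Walk.nil)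
  have h2 : (completeBipartiteGraph (Fin n) (Fin m)).dist (inr b) (inr b') ≤ 2 := dist_le w
  have h0 : (completeBipartiteGraph (Fin n) (Fin m)).dist (inr b) (inr b') ≠ 0 := by
    intro hc
    rw [dist_eq_zero_iff_eq_or_not_reachable] at hc
    rcases hc with hc | hc
    · exact h (by simpa using hc)
    · exact hc ⟨w⟩
  have h1 : (completeBipartiteGraph (Fin n) (Fin m)).dist (inr b) (inr b') ≠ 1 := by
    intro hc; rw [dist_eq_one_iff_adj] at hc; simp at hc
  omega

lemma dist_lr (n m : ℕ) (a : Fin n) (b : Fin m) :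
    (completeBipartiteGraph (Fin n) (Fin m)).dist (inl a) (inr b) = 1 :=
  dist_eq_one_iff_adj.mpr (by simp)

lemma dist_rl (n m : ℕ) (a : Fin n) (b : Fin m) :
    (completeBipartiteGraph (Fin n) (Fin m)).dist (inr b) (inl a) = 1 :=
  dist_eq_one_iff_adj.mpr (by simp)


lemma count_pairs {M q : ℕ} (hM : 0 < M) (hq : q ≤ M) :
    q.choose 2 ≤ (Finset.univ.filter
      fun bb : Fin M × Fin M => bb.1.val < bb.2.val ∧ bb.2.val < q).card := by
  classical
  have hcard : ((Finset.univ : Finset (Fin q)).powersetCard 2).card = q.choose 2 := by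
    rw [Finset.card_powersetCard, Finset.card_univ, Fintype.card_fin]
  rw [← hcard]
  have key : ∀ (t : Finset (Fin q)), t.card = 2 → ∀ (hn : t.Nonempty),
      t = {t.min' hn, t.max' hn} ∧ t.min' hn < t.max' hn := by
    intro t hc hn
    have hlt : t.min' hn < t.max' hn := Finset.min'_lt_max'_of_card _ (by omega)
    refine ⟨(Finset.eq_of_subset_of_card_le ?_ ?_).symm, hlt⟩
    · intro z hz
      simp only [Finset.mem_insert, Finset.mem_singleton] at hz
      rcases hz with rfl | rfl
      · exact Finset.min'_mem _ _
      · exact Finset.max'_mem _ _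
    · rw [hc, Finset.card_pair hlt.ne]
  apply Finset.card_le_card_of_injOn
    (fun t => if h : t.Nonempty then
      (Fin.castLE hq (t.min' h), Fin.castLE hq (t.max' h)) else (⟨0, hM⟩, ⟨0, hM⟩))
  · intro t ht
    rw [Finset.mem_coe, Finset.mem_powersetCard] at ht
    obtain ⟨-, hc⟩ := ht
    have hn : t.Nonempty := Finset.card_pos.mp (by omega)
    obtain ⟨-, hlt⟩ := key t hc hn
    simp only [dif_pos hn, Finset.mem_coe, Finset.mem_filter, Finset.mem_univ, true_and]
    exact ⟨hlt, (t.max' hn).isLt⟩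
  · intro t1 h1 t2 h2 heq
    simp only [Finset.mem_coe, Finset.mem_powersetCard] at h1 h2
    have hn1 : t1.Nonempty := Finset.card_pos.mp (by omega)
    have hn2 : t2.Nonempty := Finset.card_pos.mp (by omega)
    simp only [dif_pos hn1, dif_pos hn2, Prod.mk.injEq] at heq
    have hmin : t1.min' hn1 = t2.min' hn2 := Fin.castLE_injective hq heq.1
    have hmax : t1.max' hn1 = t2.max' hn2 := Fin.castLE_injective hq heq.2
    rw [(key t1 h1.2 hn1).1, (key t2 h2.2 hn2).1, hmin, hmax]

lemma exists_mid (N M kk qq : ℕ) (hN : 0 < N) (hM : 0 < M) (hqM : qq ≤ M)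
    (h : N - kk ≤ qq.choose 2) :
    ∃ mid : Fin M → Fin M → Fin N, (∀ b b', mid b b' = mid b' b) ∧
      ∀ a : Fin N, kk ≤ a.val → ∃ b b' : Fin M,
        b.val < b'.val ∧ b'.val < qq ∧ mid b b' = a := by
  classical
  set U : Finset (Fin N) := Finset.univ.filter (fun a => kk ≤ a.val) with hU
  set P : Finset (Fin M × Fin M) :=
    Finset.univ.filter (fun bb : Fin M × Fin M => bb.1.val < bb.2.val ∧ bb.2.val < qq) with hP
  have hUcard : U.card ≤ N - kk := by
    have := Finset.card_le_card_of_injOn (fun a : Fin N => a.val - kk)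
      (s := U) (t := Finset.range (N - kk)) ?_ ?_
    · exact (by simpa using this)
    · intro a ha
      simp only [hU, Finset.mem_coe, Finset.mem_filter] at ha
      simp only [Finset.mem_coe, Finset.mem_range]
      omega
    · intro a1 ha1 a2 ha2 hv
      simp only [hU, Finset.coe_filter, Set.mem_setOf_eq] at ha1 ha2
      have hv2 : a1.val - kk = a2.val - kk := hv
      have : a1.val = a2.val := by omega
      exact Fin.val_injective this
  have hUP : U.card ≤ P.card := hUcard.trans (h.trans (count_pairs hM hqM))
  obtain ⟨P', hP'sub, hP'card⟩ := Finset.exists_subset_card_eq hUP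
  have e : (U : Type _) ≃ (P' : Type _) := Finset.equivOfCardEq hP'card.symm
  set φ : Fin N → Fin M × Fin M := fun a =>
    if ha : a ∈ U then (e ⟨a, ha⟩ : Fin M × Fin M) else ((⟨0, hM⟩ : Fin M), ⟨0, hM⟩) with hφ
  set ord : Fin M → Fin M → Fin M × Fin M := fun b b' => if b ≤ b' then (b, b') else (b', b)
    with hord
  have hordsym : ∀ b b', ord b b' = ord b' b := by
    intro b b'
    simp only [hord]
    rcases le_total b b' with hle | hle
    · rcases eq_or_lt_of_le hle with rfl | hlt
      · simp
      · rw [if_pos hle, if_neg (not_le.mpr hlt)]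
    · rcases eq_or_lt_of_le hle with rfl | hlt
      · simp
      · rw [if_neg (not_le.mpr hlt), if_pos hle]
  refine ⟨fun b b' => if hex : ∃ a, a ∈ U ∧ φ a = ord b b' then hex.choose else ⟨0, hN⟩,
    ?_, ?_⟩
  · intro b b'
    simp only [hordsym b b']
  · intro a ha
    have haU : a ∈ U := by simp [hU, ha]
    have hmem : φ a ∈ P' := by
      simp only [hφ, dif_pos haU]
      exact (e ⟨a, haU⟩).2
    have hmemP := hP'sub hmem
    simp only [hP, Finset.mem_filter] at hmemP
    obtain ⟨-, hlt, hq'⟩ := hmemP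
    refine ⟨(φ a).1, (φ a).2, hlt, hq', ?_⟩
    have hordeq : ord (φ a).1 (φ a).2 = φ a := by
      simp only [hord, if_pos (le_of_lt (Fin.lt_def.mpr hlt))]
    have hex : ∃ a', a' ∈ U ∧ φ a' = ord (φ a).1 (φ a).2 := ⟨a, haU, hordeq.symm⟩
    beta_reduce
    rw [dif_pos hex]
    obtain ⟨ha'U, ha'eq⟩ := hex.choose_spec
    have ha'eq2 : φ hex.choose = φ a := ha'eq.trans hordeq
    have hφinj : ∀ a1, a1 ∈ U → ∀ a2, a2 ∈ U → φ a1 = φ a2 → a1 = a2 := by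
      intro a1 h1U a2 h2U hfe
      simp only [hφ, dif_pos h1U, dif_pos h2U] at hfe
      have h2 := e.injective (Subtype.ext hfe)
      exact Subtype.ext_iff.mp h2
    exact hφinj _ ha'U _ haU ha'eq2


lemma card_filter_lt {N k : ℕ} (hk : k ≤ N) :
    ((Finset.univ : Finset (Fin N)).filter fun a => a.val < k).card = k := by
  classical
  have himg : ((Finset.univ : Finset (Fin N)).filter fun a => a.val < k)
      = (Finset.univ : Finset (Fin k)).image (Fin.castLE hk) := by
    ext a
    simp only [Finset.mem_filter, Finset.mem_univ, true_and, Finset.mem_image, Fin.ext_iff]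
    constructor
    · intro h; exact ⟨⟨a.val, h⟩, by simp [Fin.castLE]⟩
    · rintro ⟨i, hi⟩
      exact hi ▸ i.isLt
  rw [himg, Finset.card_image_of_injective _ (Fin.castLE_injective hk), Finset.card_univ,
    Fintype.card_fin]

variable {n m : ℕ}

def pathLL (a a' : Fin n) (b : Fin m) :
    (completeBipartiteGraph (Fin n) (Fin m)).Walk (inl a) (inl a') :=
  Walk.cons (by simp) (Walk.cons
    (show (completeBipartiteGraph (Fin n) (Fin m)).Adj (inr b) (inl a') by simp) Walk.nil)

def pathRR (b b' : Fin m) (a : Fin n) :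
    (completeBipartiteGraph (Fin n) (Fin m)).Walk (inr b) (inr b') :=
  Walk.cons (by simp) (Walk.cons
    (show (completeBipartiteGraph (Fin n) (Fin m)).Adj (inl a) (inr b') by simp) Walk.nil)

def theWalk (mX : Fin m → Fin m → Fin n) (mY : Fin n → Fin n → Fin m) :
    ∀ u v : Fin n ⊕ Fin m, (completeBipartiteGraph (Fin n) (Fin m)).Walk u v
  | inl a, inl a' => if h : a = a' then by subst h; exact Walk.nil else pathLL a a' (mY a a')
  | inl a, inr b => Walk.cons (by simp) Walk.nil
  | inr b, inl a => Walk.cons (by simp) Walk.nil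
  | inr b, inr b' => if h : b = b' then by subst h; exact Walk.nil else pathRR b b' (mX b b')

lemma upper (n m k q : ℕ) (h3 : 3 ≤ n) (hnm : n ≤ m) (hk : k ≤ n) (hq : q ≤ m)
    (hfx : n - k ≤ q.choose 2) (hgy : m - q ≤ k.choose 2) :
    ∃ S : Finset (Fin n ⊕ Fin m), S.card = k + q ∧
      IsStrongGeodeticSet (completeBipartiteGraph (Fin n) (Fin m)) ↑S := by
  classical
  have hn : 0 < n := by omega
  have hm : 0 < m := by omega
  obtain ⟨mX, hmXsym, hmXcov⟩ := exists_mid n m k q hn hm hq hfx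
  obtain ⟨mY, hmYsym, hmYcov⟩ := exists_mid m n q k hm hn hk hgy
  refine ⟨((Finset.univ.filter fun a : Fin n => a.val < k).image inl) ∪
    ((Finset.univ.filter fun b : Fin m => b.val < q).image inr), ?_, ?_⟩
  · rw [Finset.card_union_of_disjoint, Finset.card_image_of_injective _ inl_injective,
      Finset.card_image_of_injective _ inr_injective, card_filter_lt hk, card_filter_lt hq]
    simp [Finset.disjoint_left]
  · set S := ((Finset.univ.filter fun a : Fin n => a.val < k).image inl) ∪
      ((Finset.univ.filter fun b : Fin m => b.val < q).image inr) with hS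
    have hSl : ∀ a : Fin n, inl a ∈ S ↔ a.val < k := by intro a; simp [hS]
    have hSr : ∀ b : Fin m, inr b ∈ S ↔ b.val < q := by intro b; simp [hS]
    refine ⟨fun u _ v _ => theWalk mX mY u v, ?_, ?_, ?_⟩
    · rintro (a | b) hu (a' | b') hv
      · rcases eq_or_ne a a' with rfl | hne
        · simp [theWalk, SimpleGraph.dist_self]
        · beta_reduce; rw [theWalk, dif_neg hne, dist_ll n m hm a a' hne]; rfl
      · beta_reduce; rw [theWalk, dist_lr]; rfl
      · beta_reduce; rw [theWalk, dist_rl]; rfl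
      · rcases eq_or_ne b b' with rfl | hne
        · simp [theWalk, SimpleGraph.dist_self]
        · beta_reduce; rw [theWalk, dif_neg hne, dist_rr n m hn b b' hne]; rfl
    · rintro (a | b) hu (a' | b') hv
      · rcases eq_or_ne a a' with rfl | hne
        · simp [theWalk]
        · beta_reduce; rw [theWalk, theWalk, dif_neg hne, dif_neg (Ne.symm hne),
            show mY a' a = mY a a' from hmYsym a' a]
          simp [pathLL]
      · beta_reduce; rw [theWalk, theWalk]; simp
      · beta_reduce; rw [theWalk, theWalk]; simp
      · rcases eq_or_ne b b' with rfl | hne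
        · simp [theWalk]
        · beta_reduce; rw [theWalk, theWalk, dif_neg hne, dif_neg (Ne.symm hne),
            show mX b' b = mX b b' from hmXsym b' b]
          simp [pathRR]
    · rintro (a | b)
      · by_cases ha : a.val < k
        · refine ⟨inl a, ?_, inl a, ?_, ?_⟩ <;>
            first
            | (exact Finset.mem_coe.mpr ((hSl a).mpr ha))
            | simp [theWalk]
        · push_neg at ha
          obtain ⟨b, b', hbb', hb'q, heq⟩ := hmXcov a ha
          refine ⟨inr b, Finset.mem_coe.mpr ((hSr b).mpr (by omega)),
            inr b', Finset.mem_coe.mpr ((hSr b').mpr hb'q), ?_⟩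
          have hne : b ≠ b' := by intro hc; rw [hc] at hbb'; omega
          beta_reduce; rw [theWalk, dif_neg hne, heq]
          simp [pathRR]
      · by_cases hb : b.val < q
        · refine ⟨inr b, Finset.mem_coe.mpr ((hSr b).mpr hb),
            inr b, Finset.mem_coe.mpr ((hSr b).mpr hb), ?_⟩
          simp [theWalk]
        · push_neg at hb
          obtain ⟨a, a', haa', ha'k, heq⟩ := hmYcov b hb
          refine ⟨inl a, Finset.mem_coe.mpr ((hSl a).mpr (by omega)),
            inl a', Finset.mem_coe.mpr ((hSl a').mpr ha'k), ?_⟩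
          have hne : a ≠ a' := by intro hc; rw [hc] at haa'; omega
          beta_reduce; rw [theWalk, dif_neg hne, heq]
          simp [pathLL]

lemma dist_le_two (n m : ℕ) (hn : 0 < n) (hm : 0 < m) (u v : Fin n ⊕ Fin m) :
    (completeBipartiteGraph (Fin n) (Fin m)).dist u v ≤ 2 := by
  rcases u with a | b <;> rcases v with a' | b'
  · rcases eq_or_ne a a' with rfl | hne
    · simp [SimpleGraph.dist_self]
    · rw [dist_ll n m hm a a' hne]
  · rw [dist_lr]; omega
  · rw [dist_rl]; omega
  · rcases eq_or_ne b b' with rfl | hne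
    · simp [SimpleGraph.dist_self]
    · rw [dist_rr n m hn b b' hne]

lemma walk_interior_left (n m : ℕ) (hn : 0 < n) (hm : 0 < m) {u v : Fin n ⊕ Fin m}
    (W : (completeBipartiteGraph (Fin n) (Fin m)).Walk u v)
    (hW : W.length = (completeBipartiteGraph (Fin n) (Fin m)).dist u v)
    {a : Fin n} (hx : inl a ∈ W.support) (hxu : inl a ≠ u) (hxv : inl a ≠ v) :
    ∃ b b' : Fin m, b ≠ b' ∧ u = inr b ∧ v = inr b' ∧
      W.support = [inr b, inl a, inr b'] := by
  have hlen : W.length ≤ 2 := hW.le.trans (dist_le_two n m hn hm u v)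
  cases W with
  | nil => simp at hx; exact absurd hx hxu
  | cons h W' =>
    rename_i w
    cases W' with
    | nil =>
      simp [Walk.support_cons, Walk.support_nil] at hx
      rcases hx with hx | hx
      · exact absurd hx hxu
      · exact absurd hx hxv
    | cons h' W'' =>
      rename_i w'
      cases W'' with
      | cons h'' W''' => simp [Walk.length_cons] at hlen
      | nil =>
        -- W = cons h (cons h' nil), support = [u, w, v]
        simp only [Walk.support_cons, Walk.support_nil, List.mem_cons,
          List.mem_singleton, List.not_mem_nil] at hx
        have hwx : w = inl a := by
          rcases hx with hx | hx | hx | hx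
          · exact absurd hx hxu
          · exact hx.symm
          · exact absurd hx hxv
          · exact absurd hx (by simp)
        subst hwx
        -- h : Adj u (inl a), so u = inr b
        rcases u with a0 | b
        · simp at h
        rcases v with a0 | b'
        · simp at h'
        refine ⟨b, b', ?_, rfl, rfl, by simp⟩
        intro hc
        subst hc
        rw [SimpleGraph.dist_self] at hW
        simp at hW

lemma walk_interior_right (n m : ℕ) (hn : 0 < n) (hm : 0 < m) {u v : Fin n ⊕ Fin m}
    (W : (completeBipartiteGraph (Fin n) (Fin m)).Walk u v)
    (hW : W.length = (completeBipartiteGraph (Fin n) (Fin m)).dist u v)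
    {c : Fin m} (hx : inr c ∈ W.support) (hxu : inr c ≠ u) (hxv : inr c ≠ v) :
    ∃ a a' : Fin n, a ≠ a' ∧ u = inl a ∧ v = inl a' ∧
      W.support = [inl a, inr c, inl a'] := by
  have hlen : W.length ≤ 2 := hW.le.trans (dist_le_two n m hn hm u v)
  cases W with
  | nil => simp at hx; exact absurd hx hxu
  | cons h W' =>
    rename_i w
    cases W' with
    | nil =>
      simp [Walk.support_cons, Walk.support_nil] at hx
      rcases hx with hx | hx
      · exact absurd hx hxu
      · exact absurd hx hxv
    | cons h' W'' =>
      rename_i w'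
      cases W'' with
      | cons h'' W''' => simp [Walk.length_cons] at hlen
      | nil =>
        simp only [Walk.support_cons, Walk.support_nil, List.mem_cons,
          List.mem_singleton, List.not_mem_nil] at hx
        have hwx : w = inr c := by
          rcases hx with hx | hx | hx | hx
          · exact absurd hx hxu
          · exact hx.symm
          · exact absurd hx hxv
          · exact absurd hx (by simp)
        subst hwx
        rcases u with a | b0
        · rcases v with a' | b0'
          · refine ⟨a, a', ?_, rfl, rfl, by simp⟩
            intro hc
            subst hc
            rw [SimpleGraph.dist_self] at hW
            simp at hW
          · simp at h'
        · simp at h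

lemma lower (n m : ℕ) (h3 : 3 ≤ n) (hnm : n ≤ m) (S : Finset (Fin n ⊕ Fin m))
    (hSgs : IsStrongGeodeticSet (completeBipartiteGraph (Fin n) (Fin m)) ↑S) :
    ∃ p q : ℕ, p ≤ n ∧ S.card = p + q ∧ n - p ≤ q.choose 2 ∧ m - q ≤ p.choose 2 := by
  classical
  have hn : 0 < n := by omega
  have hm : 0 < m := by omega
  obtain ⟨γ, hlen, hsymm, hcov⟩ := hSgs
  set A : Finset (Fin n) := Finset.univ.filter (fun a => inl a ∈ S) with hA
  set B : Finset (Fin m) := Finset.univ.filter (fun b => inr b ∈ S) with hB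
  refine ⟨A.card, B.card, ?_, ?_, ?_, ?_⟩
  · exact (Finset.card_filter_le _ _).trans (by simp)
  · have hdecomp : S = A.image inl ∪ B.image inr := by
      ext x
      rcases x with a | b <;> simp [hA, hB]
    rw [hdecomp, Finset.card_union_of_disjoint (by simp [Finset.disjoint_left]),
      Finset.card_image_of_injective _ inl_injective,
      Finset.card_image_of_injective _ inr_injective]
  · -- n - p ≤ choose q 2
    have hkey : ∀ a : Fin n, ∃ bb : Fin m × Fin m, inl a ∉ S →
        bb.1 ≠ bb.2 ∧ inr bb.1 ∈ S ∧ inr bb.2 ∈ S ∧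
        ∀ (hb : inr bb.1 ∈ (↑S : Set (Fin n ⊕ Fin m)))
          (hb' : inr bb.2 ∈ (↑S : Set (Fin n ⊕ Fin m))),
          (γ (inr bb.1) hb (inr bb.2) hb').support = [inr bb.1, inl a, inr bb.2] := by
      intro a
      by_cases ha : inl a ∉ S
      · obtain ⟨u, hu, v, hv, hx⟩ := hcov (inl a)
        have hxu : inl a ≠ u := by rintro rfl; exact ha hu
        have hxv : inl a ≠ v := by rintro rfl; exact ha hv
        obtain ⟨b, b', hne, rfl, rfl, hsup⟩ :=
          walk_interior_left n m hn hm (γ _ hu _ hv) (hlen _ hu _ hv) hx hxu hxv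
        exact ⟨(b, b'), fun _ => ⟨hne, hu, hv, fun hb hb' => hsup⟩⟩
      · exact ⟨(⟨0, hm⟩, ⟨0, hm⟩), fun h => absurd h (by simpa using ha)⟩
    choose F hF using hkey
    have hinj : ((Finset.univ : Finset (Fin n)).filter fun a => inl a ∉ S).card ≤
        (B.powersetCard 2).card := by
      apply Finset.card_le_card_of_injOn (fun a => {(F a).1, (F a).2})
      · intro a ha
        simp only [Finset.mem_coe, Finset.mem_filter, Finset.mem_univ, true_and] at ha
        obtain ⟨hne, hm1, hm2, -⟩ := hF a ha
        rw [Finset.mem_coe, Finset.mem_powersetCard]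
        constructor
        · intro z hz
          simp only [Finset.mem_insert, Finset.mem_singleton] at hz
          rcases hz with rfl | rfl <;> simp [hB, hm1, hm2]
        · exact Finset.card_pair hne
      · intro a1 ha1 a2 ha2 heq
        simp only [Finset.coe_filter, Set.mem_setOf_eq, Finset.mem_univ, true_and] at ha1 ha2
        obtain ⟨b1, b1', hF1⟩ : ∃ x y, F a1 = (x, y) := ⟨(F a1).1, (F a1).2, rfl⟩
        obtain ⟨b2, b2', hF2⟩ : ∃ x y, F a2 = (x, y) := ⟨(F a2).1, (F a2).2, rfl⟩
        obtain ⟨hne1, hm1, hm1', hs1⟩ := hF a1 ha1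
        obtain ⟨hne2, hm2, hm2', hs2⟩ := hF a2 ha2
        simp only at heq
        rw [hF1] at heq hne1 hm1 hm1' hs1
        rw [hF2] at heq hne2 hm2 hm2' hs2
        simp only at heq hne1 hm1 hm1' hs1 hne2 hm2 hm2' hs2
        -- heq : {b1, b1'} = {b2, b2'}
        have hb2 : b2 = b1 ∨ b2 = b1' := by
          have : b2 ∈ ({b1, b1'} : Finset (Fin m)) := heq ▸ (by simp)
          simpa using this
        have hb2' : b2' = b1 ∨ b2' = b1' := by
          have : b2' ∈ ({b1, b1'} : Finset (Fin m)) := heq ▸ (by simp)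
          simpa using this
        rcases hb2 with rfl | rfl
        · rcases hb2' with rfl | rfl
          · exact absurd rfl hne2
          · have e1 := hs1 (Finset.mem_coe.mpr hm1) (Finset.mem_coe.mpr hm1')
            have e2 := hs2 (Finset.mem_coe.mpr hm1) (Finset.mem_coe.mpr hm1')
            have := e1.symm.trans e2
            simp only [List.cons.injEq] at this
            exact inl_injective this.2.1
        · rcases hb2' with rfl | rfl
          · -- swapped: b2 = b1', b2' = b1
            have e1 := hs1 (Finset.mem_coe.mpr hm1) (Finset.mem_coe.mpr hm1')
            have e2 := hs2 (Finset.mem_coe.mpr hm2) (Finset.mem_coe.mpr hm2')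
            rw [hsymm] at e2
            rw [Walk.support_reverse, e1] at e2
            simp only [List.reverse_cons, List.reverse_nil, List.nil_append,
              List.cons_append, List.singleton_append, List.cons.injEq] at e2
            exact inl_injective e2.2.1
          · exact absurd rfl hne2
    rw [Finset.card_powersetCard] at hinj
    have hsplit := Finset.card_filter_add_card_filter_not
      (s := (Finset.univ : Finset (Fin n))) (p := fun a => inl a ∈ S)
    simp only [Finset.card_univ, Fintype.card_fin] at hsplit
    rw [hA]
    omega
  · -- m - q ≤ choose p 2
    have hkey : ∀ b : Fin m, ∃ aa : Fin n × Fin n, inr b ∉ S →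
        aa.1 ≠ aa.2 ∧ inl aa.1 ∈ S ∧ inl aa.2 ∈ S ∧
        ∀ (ha : inl aa.1 ∈ (↑S : Set (Fin n ⊕ Fin m)))
          (ha' : inl aa.2 ∈ (↑S : Set (Fin n ⊕ Fin m))),
          (γ (inl aa.1) ha (inl aa.2) ha').support = [inl aa.1, inr b, inl aa.2] := by
      intro b
      by_cases hb : inr b ∉ S
      · obtain ⟨u, hu, v, hv, hx⟩ := hcov (inr b)
        have hxu : inr b ≠ u := by rintro rfl; exact hb hu
        have hxv : inr b ≠ v := by rintro rfl; exact hb hv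
        obtain ⟨a, a', hne, rfl, rfl, hsup⟩ :=
          walk_interior_right n m hn hm (γ _ hu _ hv) (hlen _ hu _ hv) hx hxu hxv
        exact ⟨(a, a'), fun _ => ⟨hne, hu, hv, fun ha ha' => hsup⟩⟩
      · exact ⟨(⟨0, hn⟩, ⟨0, hn⟩), fun h => absurd h (by simpa using hb)⟩
    choose F hF using hkey
    have hinj : ((Finset.univ : Finset (Fin m)).filter fun b => inr b ∉ S).card ≤
        (A.powersetCard 2).card := by
      apply Finset.card_le_card_of_injOn (fun b => {(F b).1, (F b).2})
      · intro b hb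
        simp only [Finset.mem_coe, Finset.mem_filter, Finset.mem_univ, true_and] at hb
        obtain ⟨hne, hm1, hm2, -⟩ := hF b hb
        rw [Finset.mem_coe, Finset.mem_powersetCard]
        constructor
        · intro z hz
          simp only [Finset.mem_insert, Finset.mem_singleton] at hz
          rcases hz with rfl | rfl <;> simp [hA, hm1, hm2]
        · exact Finset.card_pair hne
      · intro b1x hb1 b2x hb2 heq
        simp only [Finset.coe_filter, Set.mem_setOf_eq, Finset.mem_univ, true_and] at hb1 hb2
        obtain ⟨a1, a1', hF1⟩ : ∃ x y, F b1x = (x, y) := ⟨(F b1x).1, (F b1x).2, rfl⟩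
        obtain ⟨a2, a2', hF2⟩ : ∃ x y, F b2x = (x, y) := ⟨(F b2x).1, (F b2x).2, rfl⟩
        obtain ⟨hne1, hm1, hm1', hs1⟩ := hF b1x hb1
        obtain ⟨hne2, hm2, hm2', hs2⟩ := hF b2x hb2
        simp only at heq
        rw [hF1] at heq hne1 hm1 hm1' hs1
        rw [hF2] at heq hne2 hm2 hm2' hs2
        simp only at heq hne1 hm1 hm1' hs1 hne2 hm2 hm2' hs2
        have ha2 : a2 = a1 ∨ a2 = a1' := by
          have : a2 ∈ ({a1, a1'} : Finset (Fin n)) := heq ▸ (by simp)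
          simpa using this
        have ha2' : a2' = a1 ∨ a2' = a1' := by
          have : a2' ∈ ({a1, a1'} : Finset (Fin n)) := heq ▸ (by simp)
          simpa using this
        rcases ha2 with rfl | rfl
        · rcases ha2' with rfl | rfl
          · exact absurd rfl hne2
          · have e1 := hs1 (Finset.mem_coe.mpr hm1) (Finset.mem_coe.mpr hm1')
            have e2 := hs2 (Finset.mem_coe.mpr hm1) (Finset.mem_coe.mpr hm1')
            have := e1.symm.trans e2
            simp only [List.cons.injEq] at this
            exact inr_injective this.2.1
        · rcases ha2' with rfl | rfl
          · have e1 := hs1 (Finset.mem_coe.mpr hm1) (Finset.mem_coe.mpr hm1')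
            have e2 := hs2 (Finset.mem_coe.mpr hm2) (Finset.mem_coe.mpr hm2')
            rw [hsymm] at e2
            rw [Walk.support_reverse, e1] at e2
            simp only [List.reverse_cons, List.reverse_nil, List.nil_append,
              List.cons_append, List.singleton_append, List.cons.injEq] at e2
            exact inr_injective e2.2.1
          · exact absurd rfl hne2
    rw [Finset.card_powersetCard] at hinj
    have hsplit := Finset.card_filter_add_card_filter_not
      (s := (Finset.univ : Finset (Fin m))) (p := fun b => inr b ∈ S)
    simp only [Finset.card_univ, Fintype.card_fin] at hsplit
    rw [hB]
    omega

end helper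

/-- Lemma 2.2: for `3 ≤ n ≤ m`, the strong geodetic number of `K_{n,m}` equals
`min { max {k + f(k), k + g(k)} : 0 ≤ k ≤ n }`. -/
theorem sg_completeBipartite_eq_min (n m : ℕ) (h3 : 3 ≤ n) (hnm : n ≤ m) :
    (strongGeodeticNumber (completeBipartiteGraph (Fin n) (Fin m)) : ℤ) =
      sInf {x : ℤ | ∃ k : ℕ, k ≤ n ∧
        x = max ((k : ℤ) + (fFun n k : ℤ)) ((k : ℤ) + gFun m k)} := by
  classical
  have hn : 0 < n := by omega
  have hm : 0 < m := by omega
  have hchoose : n ≤ n.choose 2 := by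
    rw [Nat.choose_two_right, Nat.le_div_iff_mul_le two_pos]
    exact Nat.mul_le_mul_left n (by omega)
  set Sg : Set ℕ := {k | ∃ S : Finset (Fin n ⊕ Fin m), S.card = k ∧
    IsStrongGeodeticSet (completeBipartiteGraph (Fin n) (Fin m)) ↑S} with hSg
  have hsgdef : strongGeodeticNumber (completeBipartiteGraph (Fin n) (Fin m)) = sInf Sg := rfl
  set T : Set ℤ := {x : ℤ | ∃ k : ℕ, k ≤ n ∧
    x = max ((k : ℤ) + (fFun n k : ℤ)) ((k : ℤ) + gFun m k)} with hT
  have hfmem : ∀ k : ℕ, n - k ≤ (fFun n k).choose 2 := by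
    intro k
    exact Nat.sInf_mem (⟨n, le_trans (Nat.sub_le _ _) hchoose⟩ :
      {q : ℕ | n - k ≤ q.choose 2}.Nonempty)
  have hfle : ∀ k : ℕ, fFun n k ≤ n := by
    intro k
    exact Nat.sInf_le (le_trans (Nat.sub_le _ _) hchoose)
  have hub : ∀ k : ℕ, k ≤ n → ∃ c : ℕ, c ∈ Sg ∧
      (c : ℤ) = max ((k : ℤ) + (fFun n k : ℤ)) ((k : ℤ) + gFun m k) := by
    intro k hk
    set q : ℕ := max (fFun n k) (gFun m k).toNat with hq
    have hqm : q ≤ m := by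
      apply max_le ((hfle k).trans hnm)
      rw [Int.toNat_le, gFun]
      omega
    have hfx : n - k ≤ q.choose 2 :=
      le_trans (hfmem k) (Nat.choose_le_choose 2 (le_max_left _ _))
    have hgy : m - q ≤ k.choose 2 := by
      have h1 : ((m : ℤ) - (k.choose 2 : ℤ)).toNat ≤ q := by
        rw [hq]; exact le_trans (le_of_eq (by rw [gFun])) (le_max_right _ _)
      omega
    obtain ⟨S, hcard, hgeo⟩ := upper n m k q h3 hnm hk hqm hfx hgy
    refine ⟨k + q, ⟨S, hcard, hgeo⟩, ?_⟩
    have hq1 : (q : ℤ) = max ((fFun n k : ℕ) : ℤ) (((gFun m k).toNat : ℕ) : ℤ) := by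
      rw [hq]; exact_mod_cast Nat.cast_max ..
    have hq2 : (((gFun m k).toNat : ℕ) : ℤ) = max (gFun m k) 0 := Int.toNat_eq_max _
    push_cast
    rw [hq1, hq2]
    simp only [max_def]
    split_ifs <;> omega
  have hTne : T.Nonempty := ⟨_, 0, by omega, rfl⟩
  have hTbdd : BddBelow T := by
    refine ⟨0, ?_⟩
    rintro x ⟨k, hk, rfl⟩
    exact le_trans (by positivity) (le_max_left ((k : ℤ) + (fFun n k : ℤ)) _)
  have hd1 : (strongGeodeticNumber (completeBipartiteGraph (Fin n) (Fin m)) : ℤ) ≤ sInf T := by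
    apply le_csInf hTne
    rintro x ⟨k, hk, rfl⟩
    obtain ⟨c, hcmem, hceq⟩ := hub k hk
    have h1 : strongGeodeticNumber (completeBipartiteGraph (Fin n) (Fin m)) ≤ c := by
      rw [hsgdef]; exact Nat.sInf_le hcmem
    calc (strongGeodeticNumber (completeBipartiteGraph (Fin n) (Fin m)) : ℤ)
        ≤ (c : ℤ) := by exact_mod_cast h1
      _ = _ := hceq
  have hd2 : sInf T ≤ (strongGeodeticNumber (completeBipartiteGraph (Fin n) (Fin m)) : ℤ) := by
    have hne0 : Sg.Nonempty := by
      obtain ⟨c, hc, -⟩ := hub 0 (by omega)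
      exact ⟨c, hc⟩
    obtain ⟨S, hScard, hSgeo⟩ := Nat.sInf_mem hne0
    obtain ⟨p, q, hpn, hpq, hx, hy⟩ := lower n m h3 hnm S hSgeo
    have hmem : max ((p : ℤ) + (fFun n p : ℤ)) ((p : ℤ) + gFun m p) ∈ T := ⟨p, hpn, rfl⟩
    have h2 := csInf_le hTbdd hmem
    have hf_le : fFun n p ≤ q := Nat.sInf_le hx
    have hmax : max ((p : ℤ) + (fFun n p : ℤ)) ((p : ℤ) + gFun m p) ≤ ((p + q : ℕ) : ℤ) := by
      apply max_le
      · push_cast; omega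
      · rw [gFun]; push_cast; omega
    rw [hsgdef, ← hScard, hpq]
    exact le_trans h2 hmax
  exact le_antisymm hd1 hd2
end

section
/- For integers 3 ≤ n ≤ m, the function F(k) = k + f(k) is (not necessarily strictly) increasing for integers 0 ≤ k ≤ n-1; moreover F(n-1) = n + 1, F(n) = n, and |F(k+1) - F(k)| ≤ 1 for all integers 0 ≤ k ≤ n-1. -/
open SimpleGraph

lemma choose_succ_two (k : ℕ) : (k+1).choose 2 = k + k.choose 2 := by
  rw [Nat.choose_succ_succ, Nat.choose_one_right]

lemma fFun_spec (n p : ℕ) : n - p ≤ (fFun n p).choose 2 := by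
  have h : fFun n p ∈ {q : ℕ | n - p ≤ q.choose 2} :=
    Nat.sInf_mem ⟨n - p + 1, by simp only [Set.mem_setOf_eq, choose_succ_two]; omega⟩
  exact h

lemma fFun_le (n p q : ℕ) (h : n - p ≤ q.choose 2) : fFun n p ≤ q := Nat.sInf_le h

lemma fFun_anti (n : ℕ) {p q : ℕ} (h : p ≤ q) : fFun n q ≤ fFun n p :=
  fFun_le _ _ _ (le_trans (Nat.sub_le_sub_left h n) (fFun_spec n p))

lemma fFun_step (n p : ℕ) (h : p + 1 ≤ n - 1) : fFun n p ≤ fFun n (p+1) + 1 := by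
  have hq : n - (p+1) ≤ (fFun n (p+1)).choose 2 := fFun_spec n (p+1)
  have h1 : 1 ≤ n - (p+1) := by omega
  have hq2 : 2 ≤ fFun n (p+1) := by
    by_contra hc
    have : (fFun n (p+1)).choose 2 = 0 := Nat.choose_eq_zero_of_lt (by omega)
    omega
  apply fFun_le
  rw [choose_succ_two]
  omega

lemma F_mono_nat (n : ℕ) : ∀ l, l ≤ n - 1 → ∀ k, k ≤ l → k + fFun n k ≤ l + fFun n l := by
  intro l
  induction l with
  | zero => intro _ k hk; obtain rfl := Nat.le_zero.mp hk; exact le_refl _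
  | succ l ih =>
    intro hl k hk
    rcases Nat.eq_or_lt_of_le hk with rfl | hlt
    · exact le_refl _
    · have h1 := ih (by omega) k (by omega)
      have h2 := fFun_step n l hl
      omega

lemma fFun_pred (n : ℕ) (h3 : 3 ≤ n) : fFun n (n-1) = 2 := by
  have h1 : n - (n-1) = 1 := by omega
  have hle : fFun n (n-1) ≤ 2 := fFun_le _ _ _ (by rw [h1]; norm_num)
  have hsp := fFun_spec n (n-1)
  rw [h1] at hsp
  have : 2 ≤ fFun n (n-1) := by
    by_contra hc
    have : (fFun n (n-1)).choose 2 = 0 := Nat.choose_eq_zero_of_lt (by omega)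
    omega
  omega

lemma fFun_self (n : ℕ) : fFun n n = 0 :=
  Nat.le_zero.mp (fFun_le _ _ _ (by simp))

/-- Lemma 2.6: for `3 ≤ n ≤ m`, `F(k) = k + f(k)` is increasing for `0 ≤ k ≤ n-1`;
moreover `F(n-1) = n + 1`, `F(n) = n`, and `|F(k+1) - F(k)| ≤ 1` for `0 ≤ k ≤ n-1`. -/
theorem F_monotone (n m : ℕ) (h3 : 3 ≤ n) (hnm : n ≤ m) :
    (∀ k l : ℕ, k ≤ l → l ≤ n - 1 →
      (k : ℤ) + (fFun n k : ℤ) ≤ (l : ℤ) + (fFun n l : ℤ)) ∧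
    ((n - 1 : ℕ) : ℤ) + (fFun n (n - 1) : ℤ) = (n : ℤ) + 1 ∧
    (n : ℤ) + (fFun n n : ℤ) = (n : ℤ) ∧
    (∀ k : ℕ, k ≤ n - 1 →
      |(((k + 1 : ℕ) : ℤ) + (fFun n (k + 1) : ℤ)) - ((k : ℤ) + (fFun n k : ℤ))| ≤ 1) := by
  refine ⟨?_, ?_, ?_, ?_⟩
  · intro k l hkl hl
    exact_mod_cast F_mono_nat n l hl k hkl
  · rw [fFun_pred n h3]; omega
  · rw [fFun_self]; omega
  · intro k hk
    rw [abs_le]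
    by_cases hc : k + 1 ≤ n - 1
    · have h1 := F_mono_nat n (k+1) hc k (by omega)
      have h2 := fFun_anti n (show k ≤ k + 1 by omega)
      constructor <;> omega
    · have hk' : k = n - 1 := by omega
      subst hk'
      have hn : n - 1 + 1 = n := by omega
      rw [hn, fFun_self, fFun_pred n h3]
      constructor <;> omega
end

section
/- Let n, m be integers with 3 ≤ n ≤ m, n - 3 < binom(m-3,2), and m - 3 ≤ binom(n-3,2). Then there is exactly one real number x ∈ [3, n-3] with f̃(x) = g̃(x), i.e. the real functions f̃ and g̃ intersect exactly once on the interval [3, n-3]. -/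
open SimpleGraph

/-- The continuous extension `f̃(x) = (1 + √(1 + 8(n - x)))/2`. -/
noncomputable def ftilde (n : ℕ) (x : ℝ) : ℝ := (1 + Real.sqrt (1 + 8 * ((n : ℝ) - x))) / 2

/-- The continuous extension `g̃(x) = m - x(x-1)/2`. -/
noncomputable def gtilde (m : ℕ) (x : ℝ) : ℝ := (m : ℝ) - x * (x - 1) / 2

set_option maxHeartbeats 800000 in
/-- Lemma 2.7: if `3 ≤ n ≤ m`, `n - 3 < binom(m-3,2)` and `m - 3 ≤ binom(n-3,2)`,
then `f̃` and `g̃` intersect exactly once on `[3, n-3]`. -/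
theorem ftilde_gtilde_unique_intersection (n m : ℕ) (h3 : 3 ≤ n) (hnm : n ≤ m)
    (h1 : n - 3 < (m - 3).choose 2) (h2 : m - 3 ≤ (n - 3).choose 2) :
    ∃! x : ℝ, x ∈ Set.Icc (3 : ℝ) ((n : ℝ) - 3) ∧ ftilde n x = gtilde m x := by
  -- basic size facts
  have hm5 : 5 ≤ m := by
    by_contra h
    have : (m - 3).choose 2 = 0 := Nat.choose_eq_zero_of_lt (by omega)
    omega
  have hn6 : 6 ≤ n := by
    by_contra h
    have : (n - 3).choose 2 ≤ (2:ℕ).choose 2 := Nat.choose_le_choose 2 (by omega)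
    simp [Nat.choose] at this
    omega
  have key1 : 2 * (n - 3) < (m - 3) * (m - 4) := by
    have e1 := Nat.choose_two_right (m - 3)
    have : m - 3 - 1 = m - 4 := by omega
    rw [this] at e1
    rw [e1] at h1
    omega
  have key2 : 2 * (m - 3) ≤ (n - 3) * (n - 4) := by
    have e2 := Nat.choose_two_right (n - 3)
    have : n - 3 - 1 = n - 4 := by omega
    rw [this] at e2
    rw [e2] at h2
    omega
  have st1 : 2 * ((n:ℝ) - 3) < ((m:ℝ) - 3) * ((m:ℝ) - 4) := by
    have := (Nat.cast_lt (α := ℝ)).2 key1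
    push_cast [Nat.cast_sub (show 3 ≤ n by omega), Nat.cast_sub (show 3 ≤ m by omega),
      Nat.cast_sub (show 4 ≤ m by omega)] at this
    linarith
  have st2 : 2 * ((m:ℝ) - 3) ≤ ((n:ℝ) - 3) * ((n:ℝ) - 4) := by
    have := (Nat.cast_le (α := ℝ)).2 key2
    push_cast [Nat.cast_sub (show 3 ≤ m by omega), Nat.cast_sub (show 3 ≤ n by omega),
      Nat.cast_sub (show 4 ≤ n by omega)] at this
    linarith
  have hnR : (6:ℝ) ≤ (n:ℝ) := by exact_mod_cast hn6
  have hmR : (5:ℝ) ≤ (m:ℝ) := by exact_mod_cast hm5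
  set h := fun x : ℝ => gtilde m x - ftilde n x with hdef
  -- strict antitonicity
  have hanti : StrictAntiOn h (Set.Icc (3:ℝ) ((n:ℝ) - 3)) := by
    intro a ha b hb hab
    obtain ⟨ha1, ha2⟩ := ha
    obtain ⟨hb1, hb2⟩ := hb
    simp only [hdef, ftilde, gtilde]
    set A := 1 + 8 * ((n:ℝ) - a) with hA
    set B := 1 + 8 * ((n:ℝ) - b) with hB
    have hB25 : (25:ℝ) ≤ B := by rw [hB]; linarith
    have hABd : A - B = 8 * (b - a) := by rw [hA, hB]; ring
    have hA2 : Real.sqrt A ^ 2 = A := Real.sq_sqrt (by linarith)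
    have hB2 : Real.sqrt B ^ 2 = B := Real.sq_sqrt (by linarith)
    have hsb : (5:ℝ) ≤ Real.sqrt B := by
      nlinarith [Real.sqrt_nonneg B]
    have hsab : Real.sqrt B ≤ Real.sqrt A := Real.sqrt_le_sqrt (by linarith)
    have key : (Real.sqrt A - Real.sqrt B) * (Real.sqrt A + Real.sqrt B) = 8 * (b - a) := by
      linear_combination hA2 - hB2 + hABd
    have hd : (Real.sqrt A - Real.sqrt B) * 10 ≤ 8 * (b - a) := by
      nlinarith
    nlinarith
  -- continuity
  have hcont : Continuous h := by
    apply Continuous.sub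
    · unfold gtilde; fun_prop
    · unfold ftilde
      apply Continuous.div_const
      exact continuous_const.add (Real.continuous_sqrt.comp (by fun_prop))
  -- endpoint values
  have hval3 : 0 < h 3 := by
    simp only [hdef, ftilde, gtilde]
    have hlt : Real.sqrt (1 + 8 * ((n:ℝ) - 3)) < 2 * (m:ℝ) - 7 := by
      rw [show (2 * (m:ℝ) - 7) = Real.sqrt ((2*(m:ℝ)-7)^2) from
        (Real.sqrt_sq (by linarith)).symm]
      apply Real.sqrt_lt_sqrt (by linarith)
      nlinarith
    linarith [hlt]
  have hvaln : h ((n:ℝ) - 3) ≤ 0 := by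
    simp only [hdef, ftilde, gtilde]
    have : (1:ℝ) + 8 * ((n:ℝ) - ((n:ℝ) - 3)) = 25 := by ring
    rw [this, show (25:ℝ) = 5^2 by norm_num, Real.sqrt_sq (by norm_num)]
    nlinarith
  -- existence via IVT
  have hmem : (0:ℝ) ∈ Set.Icc (h ((n:ℝ) - 3)) (h 3) := ⟨hvaln, le_of_lt hval3⟩
  have hsub := intermediate_value_Icc' (show (3:ℝ) ≤ (n:ℝ) - 3 by linarith)
    hcont.continuousOn
  obtain ⟨x, hx, hx0⟩ := hsub hmem
  refine ⟨x, ⟨hx, ?_⟩, ?_⟩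
  · simp only [hdef] at hx0; linarith [hx0]
  · rintro y ⟨hy, hyeq⟩
    apply hanti.injOn hy hx
    simp only [hdef] at hx0 ⊢
    rw [hyeq]
    linarith [hx0]
end

section
/- Let n, m be integers with 7 ≤ n ≤ m and m ≤ 3 + binom(n-3,2), and let x* ∈ [3, n-3] be a real number with f̃(x*) = g̃(x*). Then F(⌈x*⌉) ≥ G(⌈x*⌉). -/
open SimpleGraph

set_option maxHeartbeats 1000000 in
/-- Lemma 2.8 (i): if `7 ≤ n ≤ m`, `m ≤ 3 + binom(n-3,2)` and `x* ∈ [3, n-3]` is an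
intersection point of `f̃` and `g̃`, then `F(⌈x*⌉) ≥ G(⌈x*⌉)`. -/
theorem F_ge_G_at_ceil (n m : ℕ) (h7 : 7 ≤ n) (hnm : n ≤ m)
    (hm : m ≤ 3 + (n - 3).choose 2)
    (x : ℝ) (hx : x ∈ Set.Icc (3 : ℝ) ((n : ℝ) - 3))
    (hroot : ftilde n x = gtilde m x) :
    (⌈x⌉ : ℤ) + gFun m (⌈x⌉).toNat ≤ (⌈x⌉ : ℤ) + (fFun n (⌈x⌉).toNat : ℤ) := by
  obtain ⟨hx3, hxn⟩ := hx
  have hp3 : (3:ℤ) ≤ ⌈x⌉ := by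
    have := Int.le_ceil x
    have : (3:ℝ) ≤ (⌈x⌉ : ℝ) := le_trans hx3 this
    exact_mod_cast this
  have hpn3 : 3 ≤ (⌈x⌉).toNat := by omega
  set pn := (⌈x⌉).toNat with hpn
  have hcast : ((pn:ℤ)) = ⌈x⌉ := Int.toNat_of_nonneg (by omega)
  set pr : ℝ := (pn : ℝ) with hprdef
  have hprceil : pr = ((⌈x⌉ : ℤ) : ℝ) := by rw [hprdef, ← hcast]; push_cast; ring
  have hxpr : x ≤ pr := by rw [hprceil]; exact Int.le_ceil x
  have hpr3 : (3:ℝ) ≤ pr := le_trans hx3 hxpr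
  have hceiln : ⌈x⌉ ≤ (n:ℤ) - 3 := by
    have : ⌈x⌉ ≤ ((n:ℤ) - 3 : ℤ) := Int.ceil_le.mpr (by push_cast; exact hxn)
    exact this
  have hpnn : pn + 3 ≤ n := by omega
  have hprn : pr ≤ (n:ℝ) - 3 := by
    rw [hprceil]
    have : ((⌈x⌉ : ℤ) : ℝ) ≤ (((n:ℤ) - 3 : ℤ) : ℝ) := by exact_mod_cast hceiln
    push_cast at this; linarith
  -- square roots
  set s : ℝ := Real.sqrt (1 + 8 * ((n:ℝ) - x)) with hs
  set t : ℝ := Real.sqrt (1 + 8 * ((n:ℝ) - pr)) with ht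
  have hxnn : (0:ℝ) ≤ 1 + 8 * ((n:ℝ) - x) := by nlinarith
  have htnn : (0:ℝ) ≤ 1 + 8 * ((n:ℝ) - pr) := by nlinarith
  have hs2 : s ^ 2 = 1 + 8 * ((n:ℝ) - x) := Real.sq_sqrt hxnn
  have ht2 : t ^ 2 = 1 + 8 * ((n:ℝ) - pr) := Real.sq_sqrt htnn
  have h25 : Real.sqrt 25 = 5 := by
    rw [show (25:ℝ) = 5 ^ 2 by norm_num, Real.sqrt_sq (by norm_num)]
  have hs5 : (5:ℝ) ≤ s := by
    rw [← h25, hs]; exact Real.sqrt_le_sqrt (by nlinarith)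
  have ht5 : (5:ℝ) ≤ t := by
    rw [← h25, ht]; exact Real.sqrt_le_sqrt (by nlinarith)
  have hts : t ≤ s := Real.sqrt_le_sqrt (by nlinarith)
  have hrooteq : (1 + s) / 2 = (m:ℝ) - x * (x - 1) / 2 := hroot
  -- step 1: gtilde at pr ≤ ftilde at pr
  have step1 : (m:ℝ) - pr * (pr - 1) / 2 ≤ (1 + t) / 2 := by
    nlinarith [mul_nonneg (sub_nonneg.2 hxpr) (by linarith : (0:ℝ) ≤ pr + x - 6),
      mul_nonneg (sub_nonneg.2 hts) (by linarith : (0:ℝ) ≤ s + t - 10),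
      sub_nonneg.2 hxpr]
  -- step 2: ftilde at pr ≤ fFun n pn
  set q : ℕ := fFun n pn with hqdef
  have hqmem : n - pn ≤ q.choose 2 := by
    have hne : {q : ℕ | n - pn ≤ q.choose 2}.Nonempty := by
      refine ⟨n, ?_⟩
      simp only [Set.mem_setOf_eq, Nat.choose_two_right]
      have h2 : n * 2 ≤ n * (n - 1) := Nat.mul_le_mul_left n (by omega)
      omega
    exact csInf_mem hne
  have hq3 : 3 ≤ q := by
    by_contra h
    have : q = 0 ∨ q = 1 ∨ q = 2 := by omega
    rcases this with h | h | h <;> rw [h] at hqmem <;> simp at hqmem <;> omega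
  have hqre : (n:ℝ) - pr ≤ (q:ℝ) * ((q:ℝ) - 1) / 2 := by
    have h1 : ((n - pn : ℕ) : ℝ) ≤ ((q.choose 2 : ℕ) : ℝ) := by exact_mod_cast hqmem
    rw [Nat.cast_choose_two] at h1
    have h2 : ((n - pn : ℕ) : ℝ) = (n:ℝ) - pr := by
      rw [hprdef, Nat.cast_sub (by omega)]
    linarith [h1, h2.symm.le, h2.le]
  have step2 : (1 + t) / 2 ≤ (q : ℝ) := by
    have hq1 : (1:ℝ) ≤ (q:ℝ) := by exact_mod_cast Nat.one_le_iff_ne_zero.mpr (by omega)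
    have htq : t ≤ 2 * (q:ℝ) - 1 := by
      have : t ≤ Real.sqrt ((2 * (q:ℝ) - 1) ^ 2) := by
        rw [ht]; exact Real.sqrt_le_sqrt (by nlinarith)
      rwa [Real.sqrt_sq (by linarith)] at this
    linarith
  -- conclude
  have hfinal : (m:ℝ) - pr * (pr - 1) / 2 ≤ (q:ℝ) := le_trans step1 step2
  have hgcast : ((gFun m pn : ℤ) : ℝ) = (m:ℝ) - pr * (pr - 1) / 2 := by
    rw [gFun]; push_cast [Nat.cast_choose_two]; ring
  have : ((gFun m pn : ℤ) : ℝ) ≤ ((q:ℤ) : ℝ) := by rw [hgcast]; push_cast; linarith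
  have hZ : gFun m pn ≤ (q:ℤ) := by exact_mod_cast this
  omega
end

section
/- Let n, m be integers with 7 ≤ n ≤ m and m ≤ 3 + binom(n-3,2), and let x* ∈ [3, n-3] be a real number with f̃(x*) = g̃(x*). Then G(⌈x*⌉ - 1) ≥ F(⌈x*⌉ - 1). -/
open SimpleGraph

lemma aux_quad (A B C : ℝ) (h0 : 0 ≤ A) (hA : A ^ 2 = 1 + 8 * C)
    (hq : (1 + A) / 2 ≤ B) : C ≤ B * (B - 1) / 2 := by
  have h1 : (0:ℝ) ≤ B - (1 + A) / 2 := by linarith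
  have h2 : (0:ℝ) ≤ B + (1 + A) / 2 - 1 := by linarith
  nlinarith [mul_nonneg h1 h2]

/-- Lemma 2.8 (ii): if `7 ≤ n ≤ m`, `m ≤ 3 + binom(n-3,2)` and `x* ∈ [3, n-3]` is an
intersection point of `f̃` and `g̃`, then `G(⌈x*⌉ - 1) ≥ F(⌈x*⌉ - 1)`. -/
theorem G_ge_F_at_ceil_sub_one (n m : ℕ) (h7 : 7 ≤ n) (hnm : n ≤ m)
    (hm : m ≤ 3 + (n - 3).choose 2)
    (x : ℝ) (hx : x ∈ Set.Icc (3 : ℝ) ((n : ℝ) - 3))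
    (hroot : ftilde n x = gtilde m x) :
    ((⌈x⌉ : ℤ) - 1) + (fFun n ((⌈x⌉ : ℤ) - 1).toNat : ℤ) ≤
      ((⌈x⌉ : ℤ) - 1) + gFun m ((⌈x⌉ : ℤ) - 1).toNat := by
  obtain ⟨hx1, hx2⟩ := hx
  set k : ℤ := ⌈x⌉ - 1 with hk
  have hceil3 : (3 : ℤ) ≤ ⌈x⌉ := by
    have := Int.le_ceil x
    have : (3 : ℝ) ≤ (⌈x⌉ : ℤ) := le_trans hx1 this
    exact_mod_cast this
  have hk2 : (2 : ℤ) ≤ k := by omega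
  set P : ℕ := k.toNat with hP
  have hPk : (P : ℤ) = k := Int.toNat_of_nonneg (by omega)
  have hP2 : 2 ≤ P := by omega
  have hPx : (P : ℝ) ≤ x := by
    have h1 : ((⌈x⌉ : ℤ) : ℝ) < x + 1 := Int.ceil_lt_add_one x
    have h2 : ((P : ℤ) : ℝ) = ((⌈x⌉ : ℤ) : ℝ) - 1 := by rw [hPk]; push_cast [hk]; ring
    have : ((P : ℤ) : ℝ) < x := by rw [h2]; linarith
    exact_mod_cast this.le
  have hPn3 : (P : ℝ) ≤ (n : ℝ) - 3 := hPx.trans hx2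
  -- sqrt facts
  set b : ℝ := Real.sqrt (1 + 8 * ((n : ℝ) - x)) with hb
  set a : ℝ := Real.sqrt (1 + 8 * ((n : ℝ) - (P : ℝ))) with ha
  have hbsq : b ^ 2 = 1 + 8 * ((n : ℝ) - x) := Real.sq_sqrt (by nlinarith)
  have hasq : a ^ 2 = 1 + 8 * ((n : ℝ) - (P : ℝ)) := Real.sq_sqrt (by nlinarith)
  have hb5 : (5 : ℝ) ≤ b := by
    rw [hb]
    have : (5 : ℝ) = Real.sqrt 25 := by
      rw [show (25 : ℝ) = 5 ^ 2 by norm_num, Real.sqrt_sq (by norm_num)]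
    rw [this]
    exact Real.sqrt_le_sqrt (by nlinarith)
  have ha5 : (5 : ℝ) ≤ a := by
    rw [ha]
    have : (5 : ℝ) = Real.sqrt 25 := by
      rw [show (25 : ℝ) = 5 ^ 2 by norm_num, Real.sqrt_sq (by norm_num)]
    rw [this]
    exact Real.sqrt_le_sqrt (by nlinarith)
  have hab : b ≤ a := Real.sqrt_le_sqrt (by nlinarith)
  -- key real inequality : ftilde n P ≤ gtilde m P
  have hroot' : (1 + b) / 2 = (m : ℝ) - x * (x - 1) / 2 := hroot
  have hkey : (1 + a) / 2 ≤ (m : ℝ) - (P : ℝ) * ((P : ℝ) - 1) / 2 := by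
    nlinarith [mul_nonneg (sub_nonneg.mpr hab) (by linarith : (0:ℝ) ≤ a + b),
      mul_nonneg (sub_nonneg.mpr hPx) (by linarith : (0:ℝ) ≤ x + (P:ℝ) - 1)]
  -- g is a nonneg integer
  have hgr : (gFun m P : ℝ) = (m : ℝ) - (P : ℝ) * ((P : ℝ) - 1) / 2 := by
    rw [gFun]; push_cast [Nat.cast_choose_two]; ring
  have hg0 : 0 ≤ gFun m P := by
    have : (0 : ℝ) ≤ (gFun m P : ℝ) := by rw [hgr]; nlinarith
    exact_mod_cast this
  set q : ℕ := (gFun m P).toNat with hq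
  have hqg : ((q : ℤ) : ℝ) = (gFun m P : ℝ) := by
    rw [hq, Int.toNat_of_nonneg hg0]
  have hqr : (q : ℝ) = (m : ℝ) - (P : ℝ) * ((P : ℝ) - 1) / 2 := by
    rw [← hgr]; exact_mod_cast hqg
  have hPn : P ≤ n := by
    have : (P : ℝ) ≤ (n : ℝ) := by linarith
    exact_mod_cast this
  -- q is in the fFun set
  have hmem : n - P ≤ q.choose 2 := by
    have hqge : (1 + a) / 2 ≤ (q : ℝ) := by rw [hqr]; exact hkey
    have hreal : ((n : ℝ) - (P : ℝ)) ≤ (q : ℝ) * ((q : ℝ) - 1) / 2 :=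
      aux_quad a (q : ℝ) ((n : ℝ) - (P : ℝ)) (by linarith) hasq hqge
    have hcast : ((n - P : ℕ) : ℝ) = (n : ℝ) - (P : ℝ) := by
      push_cast [Nat.cast_sub hPn]; ring
    have hch : ((q.choose 2 : ℕ) : ℝ) = (q : ℝ) * ((q : ℝ) - 1) / 2 := by
      rw [Nat.cast_choose_two]
    have : ((n - P : ℕ) : ℝ) ≤ ((q.choose 2 : ℕ) : ℝ) := by
      rw [hcast, hch]; exact hreal
    exact_mod_cast this
  have hle : fFun n P ≤ q := Nat.sInf_le hmem
  have : (fFun n P : ℤ) ≤ gFun m P := by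
    calc (fFun n P : ℤ) ≤ (q : ℤ) := by exact_mod_cast hle
      _ = gFun m P := Int.toNat_of_nonneg hg0
  omega
end

section
/- Let n ≥ 2 and let T be a strong geodetic set of the crown graph S_n^0 with bipartition (X,Y), and set T_1 = T ∩ X, T_2 = T ∩ Y, t_1 = |T_1|, t_2 = |T_2|. If |t_1 - t_2| ≥ 2, then there exists a strong geodetic set T' of S_n^0 with |T'| = |T| and | |T' ∩ X| - |T' ∩ Y| | < |t_1 - t_2|. -/
open SimpleGraph

/-- The crown graph `Sₙ⁰`: the complete bipartite graph `K_{n,n}` minus a perfect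
matching, i.e. `x i` is adjacent to `y j` iff `i ≠ j`. -/
def crownGraph (n : ℕ) : SimpleGraph (Fin n ⊕ Fin n) :=
  SimpleGraph.fromRel fun a b => ∃ i j : Fin n, i ≠ j ∧ a = Sum.inl i ∧ b = Sum.inr j

open Sum (inl inr)

namespace CrownAux
variable {n : ℕ}

@[simp] lemma adj_inl_inr {i j : Fin n} : (crownGraph n).Adj (inl i) (inr j) ↔ i ≠ j := by
  constructor
  · rintro ⟨hne, (⟨a, b, hab, h1, h2⟩ | ⟨a, b, hab, h1, h2⟩)⟩ <;>
      simp_all <;> rintro rfl <;> simp_all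
  · intro h
    exact ⟨by simp, Or.inl ⟨i, j, h, rfl, rfl⟩⟩

@[simp] lemma adj_inr_inl {i j : Fin n} : (crownGraph n).Adj (inr i) (inl j) ↔ j ≠ i := by
  rw [adj_comm]; exact adj_inl_inr

@[simp] lemma adj_inl_inl {i j : Fin n} : ¬ (crownGraph n).Adj (inl i) (inl j) := by
  rintro ⟨hne, (⟨a, b, hab, h1, h2⟩ | ⟨a, b, hab, h1, h2⟩)⟩ <;> simp_all

@[simp] lemma adj_inr_inr {i j : Fin n} : ¬ (crownGraph n).Adj (inr i) (inr j) := by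
  rintro ⟨hne, (⟨a, b, hab, h1, h2⟩ | ⟨a, b, hab, h1, h2⟩)⟩ <;> simp_all

lemma adj_inl {i : Fin n} {w} (h : (crownGraph n).Adj (inl i) w) : ∃ j, w = inr j ∧ i ≠ j := by
  cases w with
  | inl j => exact absurd h adj_inl_inl
  | inr j => exact ⟨j, rfl, adj_inl_inr.mp h⟩

lemma adj_inr {i : Fin n} {w} (h : (crownGraph n).Adj (inr i) w) : ∃ j, w = inl j ∧ j ≠ i := by
  cases w with
  | inl j => exact ⟨j, rfl, adj_inr_inl.mp h⟩
  | inr j => exact absurd h adj_inr_inr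

end CrownAux

namespace CrownAux
variable {n : ℕ}

noncomputable def pick2 (i j : Fin n) : Fin n :=
  if h : (Finset.univ \ {i, j}).Nonempty then h.choose else i

lemma pick2_spec (hn : 3 ≤ n) (i j : Fin n) : pick2 i j ≠ i ∧ pick2 i j ≠ j := by
  have hne : (Finset.univ \ {i, j} : Finset (Fin n)).Nonempty := by
    rw [← Finset.card_pos, Finset.card_sdiff_of_subset (Finset.subset_univ _)]
    have h1 : ({i, j} : Finset (Fin n)).card ≤ 2 := Finset.card_insert_le _ _ |>.trans (by simp)
    simp only [Finset.card_univ, Fintype.card_fin]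
    omega
  rw [pick2, dif_pos hne]
  have := hne.choose_spec
  simp only [Finset.mem_sdiff, Finset.mem_insert, Finset.mem_singleton] at this
  exact ⟨fun h => this.2 (Or.inl h), fun h => this.2 (Or.inr h)⟩

noncomputable def pick1 (i : Fin n) : Fin n := pick2 i i

lemma pick1_spec (hn : 3 ≤ n) (i : Fin n) : pick1 i ≠ i := (pick2_spec hn i i).1

def wXXm (i j m : Fin n) (h1 : m ≠ i) (h2 : m ≠ j) : (crownGraph n).Walk (inl i) (inl j) :=
  .cons (adj_inl_inr.mpr (Ne.symm h1)) (.cons (adj_inr_inl.mpr (Ne.symm h2)) .nil)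

def wYYm (i j m : Fin n) (h1 : m ≠ i) (h2 : m ≠ j) : (crownGraph n).Walk (inr i) (inr j) :=
  .cons (adj_inr_inl.mpr h1) (.cons (adj_inl_inr.mpr h2) .nil)

def wMm (i p q : Fin n) (h1 : p ≠ i) (h2 : q ≠ p) (h3 : q ≠ i) :
    (crownGraph n).Walk (inl i) (inr i) :=
  .cons (adj_inl_inr.mpr (Ne.symm h1)) (.cons (adj_inr_inl.mpr h2)
    (.cons (adj_inl_inr.mpr h3) .nil))

def wC (i j : Fin n) (h : i ≠ j) : (crownGraph n).Walk (inl i) (inr j) :=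
  .cons (adj_inl_inr.mpr h) .nil

@[simp] lemma wXXm_length (i j m : Fin n) (h1 h2) : (wXXm i j m h1 h2).length = 2 := rfl
@[simp] lemma wYYm_length (i j m : Fin n) (h1 h2) : (wYYm i j m h1 h2).length = 2 := rfl
@[simp] lemma wMm_length (i p q : Fin n) (h1 h2 h3) : (wMm i p q h1 h2 h3).length = 3 := rfl
@[simp] lemma wC_length (i j : Fin n) (h) : (wC i j h).length = 1 := rfl

@[simp] lemma wXXm_support (i j m : Fin n) (h1 h2) :
    (wXXm i j m h1 h2).support = [inl i, inr m, inl j] := rfl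
@[simp] lemma wYYm_support (i j m : Fin n) (h1 h2) :
    (wYYm i j m h1 h2).support = [inr i, inl m, inr j] := rfl
@[simp] lemma wMm_support (i p q : Fin n) (h1 h2 h3) :
    (wMm i p q h1 h2 h3).support = [inl i, inr p, inl q, inr i] := rfl
@[simp] lemma wC_support (i j : Fin n) (h) : (wC i j h).support = [inl i, inr j] := rfl

lemma dist_inl_inl (hn : 3 ≤ n) {i j : Fin n} (hij : i ≠ j) :
    (crownGraph n).dist (inl i) (inl j) = 2 := by
  obtain ⟨hm1, hm2⟩ := pick2_spec hn i j
  have hle : (crownGraph n).dist (inl i) (inl j) ≤ 2 := by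
    simpa using SimpleGraph.dist_le (wXXm i j _ hm1 hm2)
  have w := wXXm i j _ hm1 hm2
  have h0 : (crownGraph n).dist (inl i) (inl j) ≠ 0 := by
    have := (w.reachable).pos_dist_of_ne (by simp [hij])
    omega
  have h1 : (crownGraph n).dist (inl i) (inl j) ≠ 1 := by
    rw [Ne, SimpleGraph.dist_eq_one_iff_adj]
    simp
  omega

lemma dist_inr_inr (hn : 3 ≤ n) {i j : Fin n} (hij : i ≠ j) :
    (crownGraph n).dist (inr i) (inr j) = 2 := by
  obtain ⟨hm1, hm2⟩ := pick2_spec hn i j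
  have hle : (crownGraph n).dist (inr i) (inr j) ≤ 2 := by
    simpa using SimpleGraph.dist_le (wYYm i j _ hm1 hm2)
  have w := wYYm i j _ hm1 hm2
  have h0 : (crownGraph n).dist (inr i) (inr j) ≠ 0 := by
    have := (w.reachable).pos_dist_of_ne (by simp [hij])
    omega
  have h1 : (crownGraph n).dist (inr i) (inr j) ≠ 1 := by
    rw [Ne, SimpleGraph.dist_eq_one_iff_adj]
    simp
  omega

lemma dist_inl_inr (hij : i ≠ j) : (crownGraph n).dist (inl i) (inr j) = 1 :=
  SimpleGraph.dist_eq_one_iff_adj.mpr (adj_inl_inr.mpr hij)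

lemma dist_matched (hn : 3 ≤ n) (i : Fin n) :
    (crownGraph n).dist (inl i) (inr i) = 3 := by
  have hp := pick1_spec hn i
  obtain ⟨hq1, hq2⟩ := pick2_spec hn (pick1 i) i
  have hle : (crownGraph n).dist (inl i) (inr i) ≤ 3 := by
    simpa using SimpleGraph.dist_le (wMm i (pick1 i) _ hp hq1 hq2)
  have w := wMm i (pick1 i) _ hp hq1 hq2
  have h0 : (crownGraph n).dist (inl i) (inr i) ≠ 0 := by
    have := (w.reachable).pos_dist_of_ne (by simp)
    omega
  have h1 : (crownGraph n).dist (inl i) (inr i) ≠ 1 := by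
    rw [Ne, SimpleGraph.dist_eq_one_iff_adj]
    simp
  have h2 : (crownGraph n).dist (inl i) (inr i) ≠ 2 := by
    intro h
    obtain ⟨p, hp2⟩ := (w.reachable).exists_walk_length_eq_dist
    rw [h] at hp2
    cases p with
    | cons ha p' =>
      obtain ⟨x, rfl, _⟩ := adj_inl ha
      cases p' with
      | nil => simp at hp2
      | cons hb p'' =>
        obtain ⟨y, rfl, _⟩ := adj_inr hb
        cases p'' with
        | cons hc p''' => simp [SimpleGraph.Walk.length_cons] at hp2
  omega

end CrownAux

namespace CrownAux
variable {n : ℕ}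

section generic
variable {V : Type*} {G : SimpleGraph V} {u v : V}

lemma support_len0 (w : G.Walk u v) (h : w.length = 0) : u = v ∧ w.support = [u] := by
  cases w with
  | nil => exact ⟨rfl, rfl⟩
  | cons ha p => simp at h

lemma support_len1 (w : G.Walk u v) (h : w.length = 1) :
    w.support = [u, v] ∧ G.Adj u v := by
  cases w with
  | nil => simp at h
  | cons ha p =>
    cases p with
    | nil => exact ⟨rfl, ha⟩
    | cons hb p' => simp at h

lemma support_len2 (w : G.Walk u v) (h : w.length = 2) :
    ∃ m, w.support = [u, m, v] ∧ G.Adj u m ∧ G.Adj m v := by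
  cases w with
  | nil => simp at h
  | cons ha p =>
    cases p with
    | nil => simp at h
    | cons hb p' =>
      cases p' with
      | nil => exact ⟨_, rfl, ha, hb⟩
      | cons hc p'' => simp at h

lemma support_len3 (w : G.Walk u v) (h : w.length = 3) :
    ∃ m₁ m₂, w.support = [u, m₁, m₂, v] ∧ G.Adj u m₁ ∧ G.Adj m₁ m₂ ∧ G.Adj m₂ v := by
  cases w with
  | nil => simp at h
  | cons ha p =>
    cases p with
    | nil => simp at h
    | cons hb p' =>
      cases p' with
      | nil => simp at h
      | cons hc p'' =>
        cases p'' with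
        | nil => exact ⟨_, _, rfl, ha, hb, hc⟩
        | cons hd p''' => simp at h

end generic

lemma geo_structure (hn : 3 ≤ n) {u v : Fin n ⊕ Fin n} (w : (crownGraph n).Walk u v)
    (hw : w.length = (crownGraph n).dist u v) :
    (u = v ∧ w.support = [u]) ∨
    (w.support = [u, v]) ∨
    (∃ i j m : Fin n, i ≠ j ∧ u = inl i ∧ v = inl j ∧ w.support = [inl i, inr m, inl j]) ∨
    (∃ i j m : Fin n, i ≠ j ∧ u = inr i ∧ v = inr j ∧ w.support = [inr i, inl m, inr j]) ∨
    (∃ i p q : Fin n, u = inl i ∧ v = inr i ∧ w.support = [inl i, inr p, inl q, inr i]) ∨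
    (∃ i p q : Fin n, u = inr i ∧ v = inl i ∧ w.support = [inr i, inl p, inr q, inl i]) := by
  by_cases huv : u = v
  · subst huv
    rw [SimpleGraph.dist_self] at hw
    exact Or.inl (support_len0 w hw)
  cases u with
  | inl i =>
    cases v with
    | inl j =>
      have hij : i ≠ j := by rintro rfl; exact huv rfl
      rw [dist_inl_inl hn hij] at hw
      obtain ⟨m, hsup, ha, hb⟩ := support_len2 w hw
      obtain ⟨x, rfl, _⟩ := adj_inl ha
      exact Or.inr (Or.inr (Or.inl ⟨i, j, x, hij, rfl, rfl, hsup⟩))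
    | inr j =>
      by_cases hij : i = j
      · subst hij
        rw [dist_matched hn] at hw
        obtain ⟨m₁, m₂, hsup, ha, hb, hc⟩ := support_len3 w hw
        obtain ⟨x, rfl, _⟩ := adj_inl ha
        obtain ⟨y, rfl, _⟩ := adj_inr hb
        exact Or.inr (Or.inr (Or.inr (Or.inr (Or.inl ⟨i, x, y, rfl, rfl, hsup⟩))))
      · rw [dist_inl_inr hij] at hw
        exact Or.inr (Or.inl (support_len1 w hw).1)
  | inr i =>
    cases v with
    | inl j =>
      by_cases hij : i = j
      · subst hij
        have : (crownGraph n).dist (inr i) (inl i) = 3 := by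
          rw [SimpleGraph.dist_comm]; exact dist_matched hn i
        rw [this] at hw
        obtain ⟨m₁, m₂, hsup, ha, hb, hc⟩ := support_len3 w hw
        obtain ⟨x, rfl, _⟩ := adj_inr ha
        obtain ⟨y, rfl, _⟩ := adj_inl hb
        exact Or.inr (Or.inr (Or.inr (Or.inr (Or.inr ⟨i, x, y, rfl, rfl, hsup⟩))))
      · have : (crownGraph n).dist (inr i) (inl j) = 1 := by
          rw [SimpleGraph.dist_comm]; exact dist_inl_inr (Ne.symm hij)
        rw [this] at hw
        exact Or.inr (Or.inl (support_len1 w hw).1)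
    | inr j =>
      have hij : i ≠ j := by rintro rfl; exact huv rfl
      rw [dist_inr_inr hn hij] at hw
      obtain ⟨m, hsup, ha, hb⟩ := support_len2 w hw
      obtain ⟨x, rfl, _⟩ := adj_inr ha
      exact Or.inr (Or.inr (Or.inr (Or.inl ⟨i, j, x, hij, rfl, rfl, hsup⟩)))

end CrownAux
namespace CrownAux
lemma pair_eq_of_doubleton {α : Type*} [LinearOrder α] {a b c d : α} (hab : a < b) (hcd : c < d)
    (h : ∀ x, (x = a ∨ x = b) ↔ (x = c ∨ x = d)) : a = c ∧ b = d := by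
  have ha : a = c ∨ a = d := (h a).mp (Or.inl rfl)
  have hb : b = c ∨ b = d := (h b).mp (Or.inr rfl)
  have hc : c = a ∨ c = b := by
    rcases (h c).mpr (Or.inl rfl) with h1 | h1
    · exact Or.inl h1
    · exact Or.inr h1
  rcases ha with h1 | h1
  · subst h1
    rcases hb with h2 | h2
    · subst h2; exact absurd hab (lt_irrefl _)
    · subst h2; exact ⟨rfl, rfl⟩
  · subst h1
    rcases hc with h3 | h3
    · subst h3; exact absurd hcd (lt_irrefl _)
    · subst h3; exact absurd (hab.trans hcd) (lt_irrefl _)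

end CrownAux

namespace CrownAux
variable {n : ℕ}

lemma necessityX (hn : 3 ≤ n) (T : Finset (Fin n ⊕ Fin n))
    (hT : IsStrongGeodeticSet (crownGraph n) ↑T) :
    n ≤ (Finset.univ.filter fun i : Fin n => inl i ∈ T).card +
        (Finset.univ.filter fun i : Fin n => inr i ∈ T).card +
        Nat.choose (Finset.univ.filter fun i : Fin n => inr i ∈ T).card 2 := by
  classical
  obtain ⟨γ, hlen, hsym, hcov⟩ := hT
  set L := Finset.univ.filter (fun i : Fin n => inl i ∈ T) with hL
  set R := Finset.univ.filter (fun i : Fin n => inr i ∈ T) with hR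
  set M := Finset.univ.filter (fun i : Fin n => inl i ∈ T ∧ inr i ∈ T) with hM
  set U := Finset.univ.filter (fun i : Fin n => ¬ inl i ∈ T) with hU
  let W : (Fin n ⊕ Fin n) → (Fin n ⊕ Fin n) → (Fin n ⊕ Fin n) → Prop := fun u v x =>
    ∃ (hu : u ∈ (↑T : Set (Fin n ⊕ Fin n))) (hv : v ∈ (↑T : Set (Fin n ⊕ Fin n))),
      x ∈ (γ u hu v hv).support
  let Rl : Fin n → Fin n × Fin n → Prop := fun i p =>
    ∀ s : Fin n, inl s ∉ T →
      (((p.1 ≠ p.2 ∧ W (inr p.1) (inr p.2) (inl s)) ∨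
        (p.1 = p.2 ∧ W (inl p.1) (inr p.1) (inl s))) ↔ s = i)
  set P := (Finset.univ ×ˢ Finset.univ).filter
      (fun p : Fin n × Fin n => (p.1 < p.2 ∧ inr p.1 ∈ T ∧ inr p.2 ∈ T) ∨
        (p.1 = p.2 ∧ inl p.1 ∈ T ∧ inr p.1 ∈ T)) with hP
  have claimA : ∀ i ∈ U, ∃ p ∈ P, Rl i p := by
    intro i hi
    rw [hU, Finset.mem_filter] at hi
    have hiT := hi.2
    obtain ⟨u, hu, v, hv, hmem⟩ := hcov (inl i)
    have hw := hlen u hu v hv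
    have huT : u ∈ T := hu
    have hvT : v ∈ T := hv
    rcases geo_structure hn (γ u hu v hv) hw with
      ⟨huv, hsup⟩ | hsup | ⟨a, b, m, hab, hua, hvb, hsup⟩ | ⟨a, b, m, hab, hua, hvb, hsup⟩ |
      ⟨a, p', q, hua, hvb, hsup⟩ | ⟨a, p', q, hua, hvb, hsup⟩
    · rw [hsup] at hmem
      simp only [List.mem_singleton] at hmem
      exact absurd (hmem ▸ huT) hiT
    · rw [hsup] at hmem
      simp only [List.mem_cons, List.mem_singleton, List.not_mem_nil, or_false] at hmem
      rcases hmem with h | h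
      · exact absurd (h ▸ huT) hiT
      · exact absurd (h ▸ hvT) hiT
    · -- inl-inl pair : impossible for covering inl i
      subst hua; subst hvb
      rw [hsup] at hmem
      simp only [List.mem_cons, List.not_mem_nil, or_false] at hmem
      rcases hmem with h | h | h
      · exact absurd (h ▸ huT) hiT
      · exact absurd h (by simp)
      · exact absurd (h ▸ hvT) hiT
    · -- inr-inr pair
      subst hua; subst hvb
      rw [hsup] at hmem
      simp only [List.mem_cons, List.not_mem_nil, or_false] at hmem
      have him : i = m := by
        rcases hmem with h | h | h
        · exact absurd h (by simp)
        · exact Sum.inl_injective h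
        · exact absurd h (by simp)
      subst him
      rcases lt_or_gt_of_ne hab with hlt | hgt
      · refine ⟨(a, b), ?_, ?_⟩
        · rw [hP, Finset.mem_filter]
          exact ⟨by simp, Or.inl ⟨hlt, huT, hvT⟩⟩
        · intro s hs
          constructor
          · rintro (⟨-, hu2, hv2, hmem2⟩ | ⟨heq, -⟩)
            · have : (γ (inr a) hu2 (inr b) hv2) = (γ (inr a) hu (inr b) hv) := rfl
              rw [this, hsup] at hmem2
              simp only [List.mem_cons, List.not_mem_nil, or_false] at hmem2
              rcases hmem2 with h | h | h
              · exact absurd h (by simp)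
              · exact Sum.inl_injective h
              · exact absurd h (by simp)
            · exact absurd heq hab
          · rintro rfl
            exact Or.inl ⟨hab, hu, hv, by rw [hsup]; simp⟩
      · refine ⟨(b, a), ?_, ?_⟩
        · rw [hP, Finset.mem_filter]
          exact ⟨by simp, Or.inl ⟨hgt, hvT, huT⟩⟩
        · intro s hs
          have hrev := hsym (inr b) hv (inr a) hu
          constructor
          · rintro (⟨-, hu2, hv2, hmem2⟩ | ⟨heq, -⟩)
            · have : (γ (inr b) hu2 (inr a) hv2) = (γ (inr a) hu (inr b) hv).reverse := hrev
              rw [this, SimpleGraph.Walk.support_reverse, List.mem_reverse, hsup] at hmem2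
              simp only [List.mem_cons, List.not_mem_nil, or_false] at hmem2
              rcases hmem2 with h | h | h
              · exact absurd h (by simp)
              · exact Sum.inl_injective h
              · exact absurd h (by simp)
            · exact absurd heq hgt.ne
          · rintro rfl
            refine Or.inl ⟨hgt.ne, hv, hu, ?_⟩
            rw [hrev, SimpleGraph.Walk.support_reverse, List.mem_reverse, hsup]; simp
    · -- matched, u = inl a, v = inr a
      subst hua; subst hvb
      rw [hsup] at hmem
      simp only [List.mem_cons, List.not_mem_nil, or_false] at hmem
      have hiq : i = q := by
        rcases hmem with h | h | h | h
        · exact absurd (h ▸ huT) hiT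
        · exact absurd h (by simp)
        · exact Sum.inl_injective h
        · exact absurd h (by simp)
      subst hiq
      refine ⟨(a, a), ?_, ?_⟩
      · rw [hP, Finset.mem_filter]
        exact ⟨by simp, Or.inr ⟨rfl, huT, hvT⟩⟩
      · intro s hs
        constructor
        · rintro (⟨hne, -⟩ | ⟨-, hu2, hv2, hmem2⟩)
          · exact absurd rfl hne
          · have : (γ (inl a) hu2 (inr a) hv2) = (γ (inl a) hu (inr a) hv) := rfl
            rw [this, hsup] at hmem2
            simp only [List.mem_cons, List.not_mem_nil, or_false] at hmem2
            rcases hmem2 with h | h | h | h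
            · exact absurd (h ▸ huT) hs
            · exact absurd h (by simp)
            · exact Sum.inl_injective h
            · exact absurd h (by simp)
        · rintro rfl
          exact Or.inr ⟨rfl, hu, hv, by rw [hsup]; simp⟩
    · -- matched, u = inr a, v = inl a
      subst hua; subst hvb
      rw [hsup] at hmem
      simp only [List.mem_cons, List.not_mem_nil, or_false] at hmem
      have hip : i = p' := by
        rcases hmem with h | h | h | h
        · exact absurd h (by simp)
        · exact Sum.inl_injective h
        · exact absurd h (by simp)
        · exact absurd (h ▸ hvT) hiT
      subst hip
      refine ⟨(a, a), ?_, ?_⟩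
      · rw [hP, Finset.mem_filter]
        exact ⟨by simp, Or.inr ⟨rfl, hvT, huT⟩⟩
      · intro s hs
        have hrev := hsym (inl a) hv (inr a) hu
        constructor
        · rintro (⟨hne, -⟩ | ⟨-, hu2, hv2, hmem2⟩)
          · exact absurd rfl hne
          · have : (γ (inl a) hu2 (inr a) hv2) = (γ (inr a) hu (inl a) hv).reverse := hrev
            rw [this, SimpleGraph.Walk.support_reverse, List.mem_reverse, hsup] at hmem2
            simp only [List.mem_cons, List.not_mem_nil, or_false] at hmem2
            rcases hmem2 with h | h | h | h
            · exact absurd h (by simp)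
            · exact Sum.inl_injective h
            · exact absurd h (by simp)
            · exact absurd (h ▸ hvT) hs
        · rintro rfl
          refine Or.inr ⟨rfl, hv, hu, ?_⟩
          rw [hrev, SimpleGraph.Walk.support_reverse, List.mem_reverse, hsup]; simp
  have cardUP : U.card ≤ P.card := by
    have hUnotT : ∀ i ∈ U, inl i ∉ T := by
      intro i hi; rw [hU, Finset.mem_filter] at hi; exact hi.2
    haveI : ∀ i : Fin n, Decidable (∃ p ∈ P, Rl i p) := fun i => Classical.propDecidable _
    refine Finset.card_le_card_of_injOn
      (fun i => if h : ∃ p ∈ P, Rl i p then h.choose else (i, i)) ?_ ?_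
    · intro i hi
      have h := claimA i hi
      simp only [dif_pos h]
      exact h.choose_spec.1
    · intro i hi i' hi' heq
      simp only [dif_pos (claimA i hi), dif_pos (claimA i' hi')] at heq
      have s1 := (claimA i hi).choose_spec.2
      have s2 := (claimA i' hi').choose_spec.2
      rw [heq] at s1
      have hw := (s2 i' (hUnotT i' hi')).mpr rfl
      exact ((s1 i' (hUnotT i' hi')).mp hw).symm
  have hPsplit : P.card ≤ Nat.choose R.card 2 + M.card := by
    rw [hP, Finset.filter_or]
    refine (Finset.card_union_le _ _).trans (Nat.add_le_add ?_ ?_)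
    · refine le_trans (Finset.card_le_card_of_injOn (t := R.powersetCard 2)
        (fun p => ({p.1, p.2} : Finset (Fin n))) ?_ ?_) ?_
      · intro p hp
        rw [Finset.mem_coe, Finset.mem_filter] at hp
        rw [Finset.mem_coe, Finset.mem_powersetCard]
        refine ⟨?_, Finset.card_pair (ne_of_lt hp.2.1)⟩
        intro x hx
        simp only [Finset.mem_insert, Finset.mem_singleton] at hx
        rw [hR, Finset.mem_filter]
        rcases hx with rfl | rfl
        · exact ⟨Finset.mem_univ _, hp.2.2.1⟩
        · exact ⟨Finset.mem_univ _, hp.2.2.2⟩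
      · intro p hp q hq heq
        have hp' := (Finset.mem_filter.mp (Finset.mem_coe.mp hp)).2.1
        have hq' := (Finset.mem_filter.mp (Finset.mem_coe.mp hq)).2.1
        have hx : ∀ x : Fin n, (x = p.1 ∨ x = p.2) ↔ (x = q.1 ∨ x = q.2) := by
          intro x
          have := Finset.ext_iff.mp heq x
          simpa using this
        have := pair_eq_of_doubleton hp' hq' hx
        exact Prod.ext this.1 this.2
      · rw [Finset.card_powersetCard]
    · refine Finset.card_le_card_of_injOn (fun p => p.1) ?_ ?_
      · intro p hp
        rw [Finset.mem_coe, Finset.mem_filter] at hp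
        rw [Finset.mem_coe, hM, Finset.mem_filter]
        exact ⟨Finset.mem_univ _, hp.2.2.1, hp.2.2.2⟩
      · intro p hp q hq heq
        have h1 := (Finset.mem_filter.mp (Finset.mem_coe.mp hp)).2.1
        have h2 := (Finset.mem_filter.mp (Finset.mem_coe.mp hq)).2.1
        exact Prod.ext heq (h1.symm.trans ((heq : p.1 = q.1).trans h2))
  have hMR : M.card ≤ R.card := by
    apply Finset.card_le_card
    intro i hi
    rw [hM, Finset.mem_filter] at hi
    rw [hR, Finset.mem_filter]
    exact ⟨hi.1, hi.2.2⟩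
  have hUL : L.card + U.card = n := by
    rw [hL, hU]
    rw [Finset.card_filter_add_card_filter_not]
    simp
  omega


lemma necessityY (hn : 3 ≤ n) (T : Finset (Fin n ⊕ Fin n))
    (hT : IsStrongGeodeticSet (crownGraph n) ↑T) :
    n ≤ (Finset.univ.filter fun i : Fin n => inl i ∈ T).card +
        (Finset.univ.filter fun i : Fin n => inr i ∈ T).card +
        Nat.choose (Finset.univ.filter fun i : Fin n => inl i ∈ T).card 2 := by
  classical
  obtain ⟨γ, hlen, hsym, hcov⟩ := hT
  set L := Finset.univ.filter (fun i : Fin n => inl i ∈ T) with hL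
  set R := Finset.univ.filter (fun i : Fin n => inr i ∈ T) with hR
  set M := Finset.univ.filter (fun i : Fin n => inl i ∈ T ∧ inr i ∈ T) with hM
  set U := Finset.univ.filter (fun i : Fin n => ¬ inr i ∈ T) with hU
  let W : (Fin n ⊕ Fin n) → (Fin n ⊕ Fin n) → (Fin n ⊕ Fin n) → Prop := fun u v x =>
    ∃ (hu : u ∈ (↑T : Set (Fin n ⊕ Fin n))) (hv : v ∈ (↑T : Set (Fin n ⊕ Fin n))),
      x ∈ (γ u hu v hv).support
  let Rl : Fin n → Fin n × Fin n → Prop := fun i p =>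
    ∀ s : Fin n, inr s ∉ T →
      (((p.1 ≠ p.2 ∧ W (inl p.1) (inl p.2) (inr s)) ∨
        (p.1 = p.2 ∧ W (inl p.1) (inr p.1) (inr s))) ↔ s = i)
  set P := (Finset.univ ×ˢ Finset.univ).filter
      (fun p : Fin n × Fin n => (p.1 < p.2 ∧ inl p.1 ∈ T ∧ inl p.2 ∈ T) ∨
        (p.1 = p.2 ∧ inl p.1 ∈ T ∧ inr p.1 ∈ T)) with hP
  have claimA : ∀ i ∈ U, ∃ p ∈ P, Rl i p := by
    intro i hi
    rw [hU, Finset.mem_filter] at hi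
    have hiT := hi.2
    obtain ⟨u, hu, v, hv, hmem⟩ := hcov (inr i)
    have hw := hlen u hu v hv
    have huT : u ∈ T := hu
    have hvT : v ∈ T := hv
    rcases geo_structure hn (γ u hu v hv) hw with
      ⟨huv, hsup⟩ | hsup | ⟨a, b, m, hab, hua, hvb, hsup⟩ | ⟨a, b, m, hab, hua, hvb, hsup⟩ |
      ⟨a, p', q, hua, hvb, hsup⟩ | ⟨a, p', q, hua, hvb, hsup⟩
    · rw [hsup] at hmem
      simp only [List.mem_singleton] at hmem
      exact absurd (hmem ▸ huT) hiT
    · rw [hsup] at hmem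
      simp only [List.mem_cons, List.mem_singleton, List.not_mem_nil, or_false] at hmem
      rcases hmem with h | h
      · exact absurd (h ▸ huT) hiT
      · exact absurd (h ▸ hvT) hiT
    · -- inl-inl pair : the productive case
      subst hua; subst hvb
      rw [hsup] at hmem
      simp only [List.mem_cons, List.not_mem_nil, or_false] at hmem
      have him : i = m := by
        rcases hmem with h | h | h
        · exact absurd h (by simp)
        · exact Sum.inr_injective h
        · exact absurd h (by simp)
      subst him
      rcases lt_or_gt_of_ne hab with hlt | hgt
      · refine ⟨(a, b), ?_, ?_⟩
        · rw [hP, Finset.mem_filter]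
          exact ⟨by simp, Or.inl ⟨hlt, huT, hvT⟩⟩
        · intro s hs
          constructor
          · rintro (⟨-, hu2, hv2, hmem2⟩ | ⟨heq, -⟩)
            · have : (γ (inl a) hu2 (inl b) hv2) = (γ (inl a) hu (inl b) hv) := rfl
              rw [this, hsup] at hmem2
              simp only [List.mem_cons, List.not_mem_nil, or_false] at hmem2
              rcases hmem2 with h | h | h
              · exact absurd h (by simp)
              · exact Sum.inr_injective h
              · exact absurd h (by simp)
            · exact absurd heq hab
          · rintro rfl
            exact Or.inl ⟨hab, hu, hv, by rw [hsup]; simp⟩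
      · refine ⟨(b, a), ?_, ?_⟩
        · rw [hP, Finset.mem_filter]
          exact ⟨by simp, Or.inl ⟨hgt, hvT, huT⟩⟩
        · intro s hs
          have hrev := hsym (inl b) hv (inl a) hu
          constructor
          · rintro (⟨-, hu2, hv2, hmem2⟩ | ⟨heq, -⟩)
            · have : (γ (inl b) hu2 (inl a) hv2) = (γ (inl a) hu (inl b) hv).reverse := hrev
              rw [this, SimpleGraph.Walk.support_reverse, List.mem_reverse, hsup] at hmem2
              simp only [List.mem_cons, List.not_mem_nil, or_false] at hmem2
              rcases hmem2 with h | h | h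
              · exact absurd h (by simp)
              · exact Sum.inr_injective h
              · exact absurd h (by simp)
            · exact absurd heq hgt.ne
          · rintro rfl
            refine Or.inl ⟨hgt.ne, hv, hu, ?_⟩
            rw [hrev, SimpleGraph.Walk.support_reverse, List.mem_reverse, hsup]; simp
    · -- inr-inr pair : impossible for covering inr i
      subst hua; subst hvb
      rw [hsup] at hmem
      simp only [List.mem_cons, List.not_mem_nil, or_false] at hmem
      rcases hmem with h | h | h
      · exact absurd (h ▸ huT) hiT
      · exact absurd h (by simp)
      · exact absurd (h ▸ hvT) hiT
    · -- matched, u = inl a, v = inr a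
      subst hua; subst hvb
      rw [hsup] at hmem
      simp only [List.mem_cons, List.not_mem_nil, or_false] at hmem
      have hip : i = p' := by
        rcases hmem with h | h | h | h
        · exact absurd h (by simp)
        · exact Sum.inr_injective h
        · exact absurd h (by simp)
        · exact absurd (h ▸ hvT) hiT
      subst hip
      refine ⟨(a, a), ?_, ?_⟩
      · rw [hP, Finset.mem_filter]
        exact ⟨by simp, Or.inr ⟨rfl, huT, hvT⟩⟩
      · intro s hs
        constructor
        · rintro (⟨hne, -⟩ | ⟨-, hu2, hv2, hmem2⟩)
          · exact absurd rfl hne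
          · have : (γ (inl a) hu2 (inr a) hv2) = (γ (inl a) hu (inr a) hv) := rfl
            rw [this, hsup] at hmem2
            simp only [List.mem_cons, List.not_mem_nil, or_false] at hmem2
            rcases hmem2 with h | h | h | h
            · exact absurd h (by simp)
            · exact Sum.inr_injective h
            · exact absurd h (by simp)
            · exact absurd (h ▸ hvT) hs
        · rintro rfl
          exact Or.inr ⟨rfl, hu, hv, by rw [hsup]; simp⟩
    · -- matched, u = inr a, v = inl a
      subst hua; subst hvb
      rw [hsup] at hmem
      simp only [List.mem_cons, List.not_mem_nil, or_false] at hmem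
      have hiq : i = q := by
        rcases hmem with h | h | h | h
        · exact absurd (h ▸ huT) hiT
        · exact absurd h (by simp)
        · exact Sum.inr_injective h
        · exact absurd h (by simp)
      subst hiq
      refine ⟨(a, a), ?_, ?_⟩
      · rw [hP, Finset.mem_filter]
        exact ⟨by simp, Or.inr ⟨rfl, hvT, huT⟩⟩
      · intro s hs
        have hrev := hsym (inl a) hv (inr a) hu
        constructor
        · rintro (⟨hne, -⟩ | ⟨-, hu2, hv2, hmem2⟩)
          · exact absurd rfl hne
          · have : (γ (inl a) hu2 (inr a) hv2) = (γ (inr a) hu (inl a) hv).reverse := hrev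
            rw [this, SimpleGraph.Walk.support_reverse, List.mem_reverse, hsup] at hmem2
            simp only [List.mem_cons, List.not_mem_nil, or_false] at hmem2
            rcases hmem2 with h | h | h | h
            · exact absurd (h ▸ huT) hs
            · exact absurd h (by simp)
            · exact Sum.inr_injective h
            · exact absurd h (by simp)
        · rintro rfl
          refine Or.inr ⟨rfl, hv, hu, ?_⟩
          rw [hrev, SimpleGraph.Walk.support_reverse, List.mem_reverse, hsup]; simp
  have cardUP : U.card ≤ P.card := by
    have hUnotT : ∀ i ∈ U, inr i ∉ T := by
      intro i hi; rw [hU, Finset.mem_filter] at hi; exact hi.2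
    haveI : ∀ i : Fin n, Decidable (∃ p ∈ P, Rl i p) := fun i => Classical.propDecidable _
    refine Finset.card_le_card_of_injOn
      (fun i => if h : ∃ p ∈ P, Rl i p then h.choose else (i, i)) ?_ ?_
    · intro i hi
      have h := claimA i hi
      simp only [dif_pos h]
      exact h.choose_spec.1
    · intro i hi i' hi' heq
      simp only [dif_pos (claimA i hi), dif_pos (claimA i' hi')] at heq
      have s1 := (claimA i hi).choose_spec.2
      have s2 := (claimA i' hi').choose_spec.2
      rw [heq] at s1
      have hw := (s2 i' (hUnotT i' hi')).mpr rfl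
      exact ((s1 i' (hUnotT i' hi')).mp hw).symm
  have hPsplit : P.card ≤ Nat.choose L.card 2 + M.card := by
    rw [hP, Finset.filter_or]
    refine (Finset.card_union_le _ _).trans (Nat.add_le_add ?_ ?_)
    · refine le_trans (Finset.card_le_card_of_injOn (t := L.powersetCard 2)
        (fun p => ({p.1, p.2} : Finset (Fin n))) ?_ ?_) ?_
      · intro p hp
        rw [Finset.mem_coe, Finset.mem_filter] at hp
        rw [Finset.mem_coe, Finset.mem_powersetCard]
        refine ⟨?_, Finset.card_pair (ne_of_lt hp.2.1)⟩
        intro x hx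
        simp only [Finset.mem_insert, Finset.mem_singleton] at hx
        rw [hL, Finset.mem_filter]
        rcases hx with rfl | rfl
        · exact ⟨Finset.mem_univ _, hp.2.2.1⟩
        · exact ⟨Finset.mem_univ _, hp.2.2.2⟩
      · intro p hp q hq heq
        have hp' := (Finset.mem_filter.mp (Finset.mem_coe.mp hp)).2.1
        have hq' := (Finset.mem_filter.mp (Finset.mem_coe.mp hq)).2.1
        have hx : ∀ x : Fin n, (x = p.1 ∨ x = p.2) ↔ (x = q.1 ∨ x = q.2) := by
          intro x
          have := Finset.ext_iff.mp heq x
          simpa using this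
        have := pair_eq_of_doubleton hp' hq' hx
        exact Prod.ext this.1 this.2
      · rw [Finset.card_powersetCard]
    · refine Finset.card_le_card_of_injOn (fun p => p.1) ?_ ?_
      · intro p hp
        rw [Finset.mem_coe, Finset.mem_filter] at hp
        rw [Finset.mem_coe, hM, Finset.mem_filter]
        exact ⟨Finset.mem_univ _, hp.2.2.1, hp.2.2.2⟩
      · intro p hp q hq heq
        have h1 := (Finset.mem_filter.mp (Finset.mem_coe.mp hp)).2.1
        have h2 := (Finset.mem_filter.mp (Finset.mem_coe.mp hq)).2.1
        exact Prod.ext heq (h1.symm.trans ((heq : p.1 = q.1).trans h2))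
  have hML : M.card ≤ L.card := by
    apply Finset.card_le_card
    intro i hi
    rw [hM, Finset.mem_filter] at hi
    rw [hL, Finset.mem_filter]
    exact ⟨hi.1, hi.2.1⟩
  have hUL : R.card + U.card = n := by
    rw [hR, hU]
    rw [Finset.card_filter_add_card_filter_not]
    simp
  omega

end CrownAux

namespace CrownAux
variable {n : ℕ}

noncomputable def gmid (b : ℕ) (i j : Fin n) : Fin n :=
  if h : 2*b + (Nat.choose j.val 2 + i.val) < n ∧ 2*b + (Nat.choose j.val 2 + i.val) ≠ i.val
      ∧ 2*b + (Nat.choose j.val 2 + i.val) ≠ j.val then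
    ⟨2*b + (Nat.choose j.val 2 + i.val), h.1⟩
  else pick2 i j

lemma gmid_ne (hn : 3 ≤ n) (b : ℕ) (i j : Fin n) : gmid b i j ≠ i ∧ gmid b i j ≠ j := by
  rw [gmid]; split_ifs with h
  · exact ⟨fun hc => h.2.1 (by simpa [Fin.ext_iff] using hc),
      fun hc => h.2.2 (by simpa [Fin.ext_iff] using hc)⟩
  · exact pick2_spec hn i j

noncomputable def hmid (a : ℕ) (i j : Fin n) : Fin n :=
  if h : a + (Nat.choose j.val 2 + i.val) < n ∧ a + (Nat.choose j.val 2 + i.val) ≠ i.val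
      ∧ a + (Nat.choose j.val 2 + i.val) ≠ j.val then
    ⟨a + (Nat.choose j.val 2 + i.val), h.1⟩
  else pick2 i j

lemma hmid_ne (hn : 3 ≤ n) (a : ℕ) (i j : Fin n) : hmid a i j ≠ i ∧ hmid a i j ≠ j := by
  rw [hmid]; split_ifs with h
  · exact ⟨fun hc => h.2.1 (by simpa [Fin.ext_iff] using hc),
      fun hc => h.2.2 (by simpa [Fin.ext_iff] using hc)⟩
  · exact pick2_spec hn i j

noncomputable def pmid (b : ℕ) (i : Fin n) : Fin n :=
  if h : b + i.val < n ∧ b + i.val ≠ i.val then ⟨b + i.val, h.1⟩ else pick1 i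

lemma pmid_ne (hn : 3 ≤ n) (b : ℕ) (i : Fin n) : pmid b i ≠ i := by
  rw [pmid]; split_ifs with h
  · exact fun hc => h.2 (by simpa [Fin.ext_iff] using hc)
  · exact pick1_spec hn i

noncomputable def qmid (a b : ℕ) (i : Fin n) : Fin n :=
  if h : a + Nat.choose b 2 + i.val < n ∧ a + Nat.choose b 2 + i.val ≠ i.val
      ∧ a + Nat.choose b 2 + i.val ≠ (pmid b i).val then
    ⟨a + Nat.choose b 2 + i.val, h.1⟩
  else pick2 i (pmid b i)

lemma qmid_ne (hn : 3 ≤ n) (a b : ℕ) (i : Fin n) :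
    qmid a b i ≠ i ∧ qmid a b i ≠ pmid b i := by
  rw [qmid]; split_ifs with h
  · exact ⟨fun hc => h.2.1 (by simpa [Fin.ext_iff] using hc),
      fun hc => h.2.2 (by simpa [Fin.ext_iff] using hc)⟩
  · exact pick2_spec hn i (pmid b i)

noncomputable def wXX (hn : 3 ≤ n) (b : ℕ) (i j : Fin n) : (crownGraph n).Walk (inl i) (inl j) :=
  wXXm i j (gmid b i j) (gmid_ne hn b i j).1 (gmid_ne hn b i j).2

noncomputable def wYY (hn : 3 ≤ n) (a : ℕ) (i j : Fin n) : (crownGraph n).Walk (inr i) (inr j) :=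
  wYYm i j (hmid a i j) (hmid_ne hn a i j).1 (hmid_ne hn a i j).2

noncomputable def wM (hn : 3 ≤ n) (a b : ℕ) (i : Fin n) : (crownGraph n).Walk (inl i) (inr i) :=
  wMm i (pmid b i) (qmid a b i) (pmid_ne hn b i) (qmid_ne hn a b i).2 (qmid_ne hn a b i).1

def key : Fin n ⊕ Fin n → ℕ := Sum.elim (fun i => i.val) (fun j => n + j.val)

lemma keyinj {u v : Fin n ⊕ Fin n} (h : key u = key v) : u = v := by
  cases u with
  | inl i => cases v with
    | inl j => simp only [key, Sum.elim_inl] at h; exact congrArg inl (Fin.ext h)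
    | inr j =>
      simp only [key, Sum.elim_inl, Sum.elim_inr] at h
      exact absurd h (by omega)
  | inr i => cases v with
    | inl j =>
      simp only [key, Sum.elim_inl, Sum.elim_inr] at h
      exact absurd h (by omega)
    | inr j =>
      simp only [key, Sum.elim_inr] at h
      exact congrArg inr (Fin.ext (by omega))

noncomputable def gw0 (hn : 3 ≤ n) (a b : ℕ) : (u v : Fin n ⊕ Fin n) → (crownGraph n).Walk u v
  | inl i, inl j =>
    if h : i = j then Walk.nil.copy rfl (by rw [h]) else wXX hn b i j
  | inl i, inr j =>
    if h : i = j then (wM hn a b i).copy rfl (by rw [h]) else wC i j h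
  | inr i, inr j =>
    if h : i = j then Walk.nil.copy rfl (by rw [h]) else wYY hn a i j
  | inr i, inl j =>
    if h : i = j then (wM hn a b j).reverse.copy (by rw [h]) rfl
    else (wC j i (Ne.symm h)).reverse

noncomputable def gwalk (hn : 3 ≤ n) (a b : ℕ) (u v : Fin n ⊕ Fin n) : (crownGraph n).Walk u v :=
  if _ : key u < key v then gw0 hn a b u v
  else if h' : key v < key u then (gw0 hn a b v u).reverse
  else Walk.nil.copy rfl (keyinj (by omega))

lemma fin_lt_of_key {i j : Fin n} (h : key (inl i) < key (inl j)) : i < j := by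
  simpa [key] using h

lemma gw0_len (hn : 3 ≤ n) (a b : ℕ) (u v : Fin n ⊕ Fin n) :
    (gw0 hn a b u v).length = (crownGraph n).dist u v := by
  cases u with
  | inl i => cases v with
    | inl j =>
      rw [gw0]; split_ifs with h
      · subst h; simp [SimpleGraph.dist_self]
      · rw [dist_inl_inl hn h]; simp [wXX]
    | inr j =>
      rw [gw0]; split_ifs with h
      · subst h; rw [dist_matched hn]; simp [wM]
      · rw [dist_inl_inr h]; simp [wC]
  | inr i => cases v with
    | inl j =>
      rw [gw0]; split_ifs with h
      · subst h
        rw [SimpleGraph.dist_comm, dist_matched hn]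
        simp [wM]
      · rw [SimpleGraph.dist_comm, dist_inl_inr (Ne.symm h)]
        simp [wC]
    | inr j =>
      rw [gw0]; split_ifs with h
      · subst h; simp [SimpleGraph.dist_self]
      · rw [dist_inr_inr hn h]; simp [wYY]

lemma gwalk_len (hn : 3 ≤ n) (a b : ℕ) (u v : Fin n ⊕ Fin n) :
    (gwalk hn a b u v).length = (crownGraph n).dist u v := by
  rw [gwalk]; split_ifs with h h'
  · exact gw0_len hn a b u v
  · rw [SimpleGraph.Walk.length_reverse, gw0_len hn a b v u, SimpleGraph.dist_comm]
  · have := keyinj (show key u = key v by omega)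
    subst this
    simp [SimpleGraph.dist_self]

lemma gwalk_symm (hn : 3 ≤ n) (a b : ℕ) (u v : Fin n ⊕ Fin n) :
    gwalk hn a b u v = (gwalk hn a b v u).reverse := by
  rcases Nat.lt_trichotomy (key u) (key v) with h | h | h
  · rw [gwalk, dif_pos h, gwalk, dif_neg (by omega), dif_pos h,
      SimpleGraph.Walk.reverse_reverse]
  · have := keyinj h
    subst this
    simp [gwalk]
  · rw [gwalk, dif_neg (by omega), dif_pos h, gwalk, dif_pos h]

end CrownAux

namespace CrownAux
variable {n : ℕ}

def Tp (n a b : ℕ) : Finset (Fin n ⊕ Fin n) :=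
  ((Finset.univ.filter (fun i : Fin n => i.val < a)).image inl) ∪
  ((Finset.univ.filter (fun i : Fin n => i.val < b)).image inr)

lemma mem_Tp_inl {a b : ℕ} {i : Fin n} : inl i ∈ Tp n a b ↔ i.val < a := by
  simp [Tp]

lemma mem_Tp_inr {a b : ℕ} {i : Fin n} : inr i ∈ Tp n a b ↔ i.val < b := by
  simp [Tp]

lemma card_filter_val_lt (a : ℕ) (ha : a ≤ n) :
    (Finset.univ.filter (fun i : Fin n => i.val < a)).card = a := by
  have himg : (Finset.univ.filter (fun i : Fin n => i.val < a)).image Fin.val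
      = Finset.range a := by
    ext m
    simp only [Finset.mem_image, Finset.mem_filter, Finset.mem_univ, true_and,
      Finset.mem_range]
    constructor
    · rintro ⟨i, hi, rfl⟩; exact hi
    · intro hm; exact ⟨⟨m, lt_of_lt_of_le hm ha⟩, hm, rfl⟩
  have := congrArg Finset.card himg
  rwa [Finset.card_image_of_injective _ Fin.val_injective, Finset.card_range] at this

lemma Tp_filter_left (a b : ℕ) :
    (Tp n a b).filter (fun x => x.isLeft = true)
      = (Finset.univ.filter (fun i : Fin n => i.val < a)).image inl := by
  ext x
  cases x <;> simp [Tp]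

lemma Tp_filter_right (a b : ℕ) :
    (Tp n a b).filter (fun x => x.isRight = true)
      = (Finset.univ.filter (fun i : Fin n => i.val < b)).image inr := by
  ext x
  cases x <;> simp [Tp]

lemma Tp_card (a b : ℕ) (ha : a ≤ n) (hb : b ≤ n) : (Tp n a b).card = a + b := by
  rw [Tp, Finset.card_union_of_disjoint]
  · rw [Finset.card_image_of_injective _ Sum.inl_injective,
      Finset.card_image_of_injective _ Sum.inr_injective,
      card_filter_val_lt a ha, card_filter_val_lt b hb]
  · rw [Finset.disjoint_left]
    rintro x hx hy
    simp only [Finset.mem_image] at hx hy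
    obtain ⟨i, -, rfl⟩ := hx
    obtain ⟨j, -, h⟩ := hy
    exact absurd h (by simp)

lemma code_surj : ∀ B v : ℕ, v < Nat.choose B 2 → ∃ i j : ℕ, i < j ∧ j < B ∧ Nat.choose j 2 + i = v := by
  intro B
  induction B with
  | zero => intro v hv; simp at hv
  | succ B ih =>
    intro v hv
    by_cases h : v < Nat.choose B 2
    · obtain ⟨i, j, h1, h2, h3⟩ := ih v h
      exact ⟨i, j, h1, Nat.lt_succ_of_lt h2, h3⟩
    · have hle : Nat.choose B 2 ≤ v := le_of_not_gt h
      have hchoose : Nat.choose (B+1) 2 = Nat.choose B 1 + Nat.choose B 2 :=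
        Nat.choose_succ_succ B 1
      rw [Nat.choose_one_right] at hchoose
      refine ⟨v - Nat.choose B 2, B, ?_, Nat.lt_succ_self B, by omega⟩
      omega

end CrownAux

namespace CrownAux
variable {n : ℕ}

lemma gwalk_supp_XX (hn : 3 ≤ n) (a b : ℕ) {i j : Fin n} (hij : i < j) :
    (gwalk hn a b (inl i) (inl j)).support = [inl i, inr (gmid b i j), inl j] := by
  have hk : key (inl i : Fin n ⊕ Fin n) < key (inl j) := by
    simpa [key] using hij
  rw [gwalk, dif_pos hk]
  show (gw0 hn a b (inl i) (inl j)).support = _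
  rw [gw0, dif_neg (ne_of_lt hij)]
  simp [wXX]

lemma gwalk_supp_YY (hn : 3 ≤ n) (a b : ℕ) {i j : Fin n} (hij : i < j) :
    (gwalk hn a b (inr i) (inr j)).support = [inr i, inl (hmid a i j), inr j] := by
  have hk : key (inr i : Fin n ⊕ Fin n) < key (inr j) := by
    simp only [key, Sum.elim_inr]
    omega
  rw [gwalk, dif_pos hk]
  show (gw0 hn a b (inr i) (inr j)).support = _
  rw [gw0, dif_neg (ne_of_lt hij)]
  simp [wYY]

lemma gwalk_supp_M (hn : 3 ≤ n) (a b : ℕ) (i : Fin n) :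
    (gwalk hn a b (inl i) (inr i)).support
      = [inl i, inr (pmid b i), inl (qmid a b i), inr i] := by
  have hk : key (inl i : Fin n ⊕ Fin n) < key (inr i) := by
    simp only [key, Sum.elim_inl, Sum.elim_inr]
    omega
  rw [gwalk, dif_pos hk]
  show (gw0 hn a b (inl i) (inr i)).support = _
  rw [gw0, dif_pos rfl]
  rw [SimpleGraph.Walk.support_copy]
  simp [wM]

lemma gwalk_supp_diag (hn : 3 ≤ n) (a b : ℕ) (u : Fin n ⊕ Fin n) :
    (gwalk hn a b u u).support = [u] := by
  rw [gwalk, dif_neg (lt_irrefl _), dif_neg (lt_irrefl _)]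
  rw [SimpleGraph.Walk.support_copy]
  simp

lemma gwalk_cover (hn : 3 ≤ n) (a b : ℕ) (hb1 : 1 ≤ b) (hba : b ≤ a) (hab1 : a ≤ b + 1)
    (han : a ≤ n) (hcnt : n ≤ a + b + Nat.choose b 2) (x : Fin n ⊕ Fin n) :
    ∃ u, ∃ _ : u ∈ (↑(Tp n a b) : Set (Fin n ⊕ Fin n)), ∃ v, ∃ _ : v ∈ (↑(Tp n a b) : Set (Fin n ⊕ Fin n)),
      x ∈ (gwalk hn a b u v).support := by
  have ha2 : 2 ≤ a := by
    by_contra hc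
    have : a = 1 := by omega
    have hbb : b = 1 := by omega
    rw [this, hbb] at hcnt
    norm_num [Nat.choose] at hcnt
    omega
  have hbn : b ≤ n := hba.trans han
  have hChoosePos : 2 ≤ b → 1 ≤ Nat.choose b 2 := fun h => Nat.choose_pos h
  cases x with
  | inl t =>
    by_cases h1 : t.val < a
    · refine ⟨inl t, ?_, inl t, ?_, ?_⟩
      · exact Finset.mem_coe.mpr (mem_Tp_inl.mpr h1)
      · exact Finset.mem_coe.mpr (mem_Tp_inl.mpr h1)
      · rw [gwalk_supp_diag hn a b]; simp
    · by_cases h2 : t.val < a + Nat.choose b 2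
      · -- covered by a Y-Y pair
        obtain ⟨i, j, hij, hjb, hcode⟩ := code_surj b (t.val - a) (by omega)
        have hjn : j < n := by omega
        have hin : i < n := by omega
        refine ⟨inr ⟨i, hin⟩, ?_, inr ⟨j, hjn⟩, ?_, ?_⟩
        · exact Finset.mem_coe.mpr (mem_Tp_inr.mpr (by simpa using hij.trans hjb))
        · exact Finset.mem_coe.mpr (mem_Tp_inr.mpr (by simpa using hjb))
        · rw [gwalk_supp_YY hn a b (show (⟨i, hin⟩ : Fin n) < ⟨j, hjn⟩ from hij)]
          have hmideq : hmid a (⟨i, hin⟩ : Fin n) (⟨j, hjn⟩ : Fin n) = t := by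
            rw [hmid, dif_pos]
            · exact Fin.ext (by simp; omega)
            · refine ⟨by simp; omega, by simp; omega, by simp; omega⟩
          rw [hmideq]
          simp
      · -- covered by a matched pair
        have hin : t.val - a - Nat.choose b 2 < b := by omega
        set i : Fin n := ⟨t.val - a - Nat.choose b 2, by omega⟩ with hidef
        refine ⟨inl i, ?_, inr i, ?_, ?_⟩
        · exact Finset.mem_coe.mpr (mem_Tp_inl.mpr (by simp [hidef]; omega))
        · exact Finset.mem_coe.mpr (mem_Tp_inr.mpr (by simp [hidef]; omega))
        · rw [gwalk_supp_M hn a b]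
          have hcond : b + i.val < n ∧ b + i.val ≠ i.val := by
            refine ⟨?_, ?_⟩ <;> · simp [hidef]; omega
          have hpm : (pmid b i).val = b + i.val := by
            rw [pmid, dif_pos hcond]
          have hq : qmid a b i = t := by
            rw [qmid, dif_pos]
            · exact Fin.ext (by simp [hidef]; omega)
            · refine ⟨by simp [hidef]; omega, by simp [hidef]; omega, ?_⟩
              rw [hpm]
              simp only [hidef]
              have : Nat.choose b 2 = 0 → b ≤ 1 := fun h => by
                by_contra hc
                have := hChoosePos (by omega)
                omega
              simp
              omega
          rw [hq]
          simp
  | inr t =>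
    by_cases h1 : t.val < b
    · refine ⟨inr t, ?_, inr t, ?_, ?_⟩
      · exact Finset.mem_coe.mpr (mem_Tp_inr.mpr h1)
      · exact Finset.mem_coe.mpr (mem_Tp_inr.mpr h1)
      · rw [gwalk_supp_diag hn a b]; simp
    · by_cases h2 : t.val < 2*b
      · -- covered by matched pair i = t - b
        have hin : t.val - b < b := by omega
        set i : Fin n := ⟨t.val - b, by omega⟩ with hidef
        refine ⟨inl i, ?_, inr i, ?_, ?_⟩
        · exact Finset.mem_coe.mpr (mem_Tp_inl.mpr (by simp [hidef]; omega))
        · exact Finset.mem_coe.mpr (mem_Tp_inr.mpr (by simp [hidef]; omega))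
        · rw [gwalk_supp_M hn a b]
          have hpm : pmid b i = t := by
            rw [pmid, dif_pos]
            · exact Fin.ext (by simp [hidef]; omega)
            · refine ⟨by simp [hidef]; omega, by simp [hidef]; omega⟩
          rw [hpm]
          simp
      · -- covered by an X-X pair
        have hbound : t.val - 2*b < Nat.choose a 2 := by
          rcases (show a = b ∨ a = b + 1 by omega) with heq | heq
          · subst heq; omega
          · have hch : Nat.choose (b+1) 2 = Nat.choose b 1 + Nat.choose b 2 :=
              Nat.choose_succ_succ b 1
            rw [Nat.choose_one_right] at hch
            rw [heq, hch]
            omega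
        obtain ⟨i, j, hij, hja, hcode⟩ := code_surj a (t.val - 2*b) hbound
        have hjn : j < n := by omega
        have hin : i < n := by omega
        refine ⟨inl ⟨i, hin⟩, ?_, inl ⟨j, hjn⟩, ?_, ?_⟩
        · exact Finset.mem_coe.mpr (mem_Tp_inl.mpr (by simpa using hij.trans hja))
        · exact Finset.mem_coe.mpr (mem_Tp_inl.mpr (by simpa using hja))
        · rw [gwalk_supp_XX hn a b (show (⟨i, hin⟩ : Fin n) < ⟨j, hjn⟩ from hij)]
          have hgm : gmid b (⟨i, hin⟩ : Fin n) (⟨j, hjn⟩ : Fin n) = t := by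
            rw [gmid, dif_pos]
            · exact Fin.ext (by simp; omega)
            · refine ⟨by simp; omega, by simp; omega, by simp; omega⟩
          rw [hgm]
          simp

end CrownAux

namespace CrownAux
variable {n : ℕ}

lemma walk_closed {V : Type*} {G : SimpleGraph V} (P : V → Prop)
    (hP : ∀ {y z}, P y → G.Adj y z → P z) : ∀ {u v}, G.Walk u v → P u → P v := by
  intro u v w
  induction w with
  | nil => exact id
  | cons h p ih => exact fun hu => ih (hP hu h)

lemma filter_left_card (T : Finset (Fin n ⊕ Fin n)) :
    (T.filter fun x => x.isLeft = true).card
      = (Finset.univ.filter fun i : Fin n => inl i ∈ T).card := by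
  have : T.filter (fun x => x.isLeft = true)
      = (Finset.univ.filter fun i : Fin n => inl i ∈ T).image inl := by
    ext x
    cases x <;> simp
  rw [this, Finset.card_image_of_injective _ Sum.inl_injective]

lemma filter_right_card (T : Finset (Fin n ⊕ Fin n)) :
    (T.filter fun x => x.isRight = true).card
      = (Finset.univ.filter fun i : Fin n => inr i ∈ T).card := by
  have : T.filter (fun x => x.isRight = true)
      = (Finset.univ.filter fun i : Fin n => inr i ∈ T).image inr := by
    ext x
    cases x <;> simp
  rw [this, Finset.card_image_of_injective _ Sum.inr_injective]

lemma card_split (T : Finset (Fin n ⊕ Fin n)) :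
    (T.filter fun x => x.isLeft = true).card + (T.filter fun x => x.isRight = true).card
      = T.card := by
  have h : T.filter (fun x => ¬ x.isLeft = true) = T.filter (fun x => x.isRight = true) := by
    apply Finset.filter_congr
    intro x _
    cases x <;> simp
  rw [← h]
  exact Finset.card_filter_add_card_filter_not _

lemma Tp_sgs (hn : 3 ≤ n) (a b : ℕ) (hb1 : 1 ≤ b) (hba : b ≤ a) (hab1 : a ≤ b + 1)
    (han : a ≤ n) (hcnt : n ≤ a + b + Nat.choose b 2) :
    IsStrongGeodeticSet (crownGraph n) ↑(Tp n a b) :=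
  ⟨fun u _ v _ => gwalk hn a b u v,
   fun u _ v _ => gwalk_len hn a b u v,
   fun u _ v _ => gwalk_symm hn a b u v,
   gwalk_cover hn a b hb1 hba hab1 han hcnt⟩

end CrownAux


open CrownAux

/-- Lemma 3.1: if `T` is a strong geodetic set of the crown graph `Sₙ⁰` (`n ≥ 2`)
whose part sizes `t₁ = |T ∩ X|`, `t₂ = |T ∩ Y|` satisfy `|t₁ - t₂| ≥ 2`, then there
is a strong geodetic set `T'` of the same cardinality with strictly smaller
imbalance between the two parts. -/
theorem crown_balance (n : ℕ) (hn : 2 ≤ n) (T : Finset (Fin n ⊕ Fin n))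
    (hT : IsStrongGeodeticSet (crownGraph n) ↑T)
    (h2 : 2 ≤ |((T.filter fun a => a.isLeft = true).card : ℤ) -
                ((T.filter fun a => a.isRight = true).card : ℤ)|) :
    ∃ T' : Finset (Fin n ⊕ Fin n),
      IsStrongGeodeticSet (crownGraph n) ↑T' ∧ T'.card = T.card ∧
      |((T'.filter fun a => a.isLeft = true).card : ℤ) -
        ((T'.filter fun a => a.isRight = true).card : ℤ)| <
      |((T.filter fun a => a.isLeft = true).card : ℤ) -
        ((T.filter fun a => a.isRight = true).card : ℤ)| := by
  classical
  set t1 := (T.filter fun a => a.isLeft = true).card with ht1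
  set t2 := (T.filter fun a => a.isRight = true).card with ht2
  have hcases : t1 ≥ t2 + 2 ∨ t2 ≥ t1 + 2 := by
    rcases abs_cases ((t1 : ℤ) - t2) with ⟨heq, -⟩ | ⟨heq, -⟩ <;> rw [heq] at h2 <;> omega
  -- rule out n = 2
  have hn3 : 3 ≤ n := by
    rcases Nat.lt_or_ge n 3 with hlt | hge
    · exfalso
      have hn2 : n = 2 := by omega
      subst hn2
      obtain ⟨γ, hlen, hsym, hcov⟩ := hT
      rcases hcases with hc | hc
      · -- two distinct inl vertices in T
        have h1lt : 1 < (T.filter fun a => a.isLeft = true).card := by omega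
        obtain ⟨x, hx, y, hy, hxy⟩ := Finset.one_lt_card.mp h1lt
        rw [Finset.mem_filter] at hx hy
        obtain ⟨i, rfl⟩ : ∃ i, x = inl i := by
          cases x with
          | inl i => exact ⟨i, rfl⟩
          | inr i => simp at hx
        obtain ⟨j, rfl⟩ : ∃ j, y = inl j := by
          cases y with
          | inl j => exact ⟨j, rfl⟩
          | inr j => simp at hy
        have hij : i ≠ j := fun h => hxy (by rw [h])
        have hw := γ (inl i) (Finset.mem_coe.mpr hx.1) (inl j) (Finset.mem_coe.mpr hy.1)
        have := walk_closed
          (fun y => y = inl i ∨ ∃ j' : Fin 2, y = inr j' ∧ j' ≠ i)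
          (by
            rintro y z (rfl | ⟨j', rfl, hj'⟩) hadj
            · obtain ⟨k, rfl, hk⟩ := adj_inl hadj
              exact Or.inr ⟨k, rfl, fun h => hk h.symm⟩
            · obtain ⟨k, rfl, hk⟩ := adj_inr hadj
              left
              have : k = i := by omega
              rw [this])
          hw (Or.inl rfl)
        rcases this with h | ⟨j', hj', -⟩
        · exact hij (Sum.inl_injective h).symm
        · exact absurd hj' (by simp)
      · -- two distinct inr vertices in T
        have h1lt : 1 < (T.filter fun a => a.isRight = true).card := by omega
        obtain ⟨x, hx, y, hy, hxy⟩ := Finset.one_lt_card.mp h1lt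
        rw [Finset.mem_filter] at hx hy
        obtain ⟨i, rfl⟩ : ∃ i, x = inr i := by
          cases x with
          | inl i => simp at hx
          | inr i => exact ⟨i, rfl⟩
        obtain ⟨j, rfl⟩ : ∃ j, y = inr j := by
          cases y with
          | inl j => simp at hy
          | inr j => exact ⟨j, rfl⟩
        have hij : i ≠ j := fun h => hxy (by rw [h])
        have hw := γ (inr i) (Finset.mem_coe.mpr hx.1) (inr j) (Finset.mem_coe.mpr hy.1)
        have := walk_closed
          (fun y => y = inr i ∨ ∃ j' : Fin 2, y = inl j' ∧ j' ≠ i)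
          (by
            rintro y z (rfl | ⟨j', rfl, hj'⟩) hadj
            · obtain ⟨k, rfl, hk⟩ := adj_inr hadj
              exact Or.inr ⟨k, rfl, hk⟩
            · obtain ⟨k, rfl, hk⟩ := adj_inl hadj
              left
              have : k = i := by omega
              rw [this])
          hw (Or.inl rfl)
        rcases this with h | ⟨j', hj', -⟩
        · exact hij (Sum.inr_injective h).symm
        · exact absurd hj' (by simp)
    · exact hge
  -- the balanced replacement
  set k := T.card with hk
  have hksplit : t1 + t2 = k := card_split T
  have ht1n : t1 ≤ n := by
    rw [ht1, filter_left_card]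
    exact (Finset.card_filter_le _ _).trans (by simp)
  have ht2n : t2 ≤ n := by
    rw [ht2, filter_right_card]
    exact (Finset.card_filter_le _ _).trans (by simp)
  set b := k / 2 with hb
  set a := k - b with ha
  have hb1 : 1 ≤ b := by omega
  have hba : b ≤ a := by omega
  have hab1 : a ≤ b + 1 := by omega
  have han : a ≤ n := by omega
  have hcnt : n ≤ a + b + Nat.choose b 2 := by
    rcases hcases with hc | hc
    · have hnec := necessityX hn3 T hT
      rw [← filter_left_card, ← filter_right_card, ← ht1, ← ht2] at hnec
      have hmono : Nat.choose t2 2 ≤ Nat.choose b 2 :=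
        Nat.choose_le_choose 2 (by omega)
      omega
    · have hnec := necessityY hn3 T hT
      rw [← filter_left_card, ← filter_right_card, ← ht1, ← ht2] at hnec
      have hmono : Nat.choose t1 2 ≤ Nat.choose b 2 :=
        Nat.choose_le_choose 2 (by omega)
      omega
  refine ⟨Tp n a b, Tp_sgs hn3 a b hb1 hba hab1 han hcnt, ?_, ?_⟩
  · rw [Tp_card a b han (by omega)]
    omega
  · have hfl : ((Tp n a b).filter fun x => x.isLeft = true).card = a := by
      rw [Tp_filter_left, Finset.card_image_of_injective _ Sum.inl_injective,
        card_filter_val_lt a han]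
    have hfr : ((Tp n a b).filter fun x => x.isRight = true).card = b := by
      rw [Tp_filter_right, Finset.card_image_of_injective _ Sum.inr_injective,
        card_filter_val_lt b (by omega)]
    rw [hfl, hfr]
    rcases abs_cases ((a : ℤ) - b) with ⟨heq, -⟩ | ⟨heq, -⟩ <;>
      rcases abs_cases ((t1 : ℤ) - t2) with ⟨heq2, -⟩ | ⟨heq2, -⟩ <;>
      rw [heq, heq2] <;> omega
end

section
/- The strong geodetic number of the 3-dimensional hypercube Q_3 equals 4. -/
open SimpleGraph

/-- The hypercube graph `Qₙ` on vertex set `{0,1}ⁿ`; two vertices are adjacent iff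
they differ in exactly one coordinate. -/
def hypercube (n : ℕ) : SimpleGraph (Fin n → Bool) :=
  SimpleGraph.fromRel fun x y => ∃ i, x i ≠ y i ∧ ∀ j, j ≠ i → x j = y j

instance (n : ℕ) : DecidableRel (hypercube n).Adj := fun x y =>
  decidable_of_iff _ (SimpleGraph.fromRel_adj _ x y).symm

lemma hamming_le_of_adj {n : ℕ} {x y : Fin n → Bool} (h : (hypercube n).Adj x y) :
    hammingDist x y ≤ 1 := by
  obtain ⟨-, h | h⟩ := h <;> obtain ⟨i, hi, hj⟩ := h <;>
  · refine le_trans (Finset.card_le_card ?_) (Finset.card_singleton i).le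
    intro j hj'
    simp only [hammingDist, Finset.mem_filter, Finset.mem_univ, true_and] at hj'
    simp only [Finset.mem_singleton]
    by_contra hne
    exact hj' (by rw [hj j hne]) 

lemma hamming_le_walk {n : ℕ} {x y : Fin n → Bool} (w : (hypercube n).Walk x y) :
    hammingDist x y ≤ w.length := by
  induction w with
  | nil => simp
  | cons h p ih =>
    calc hammingDist _ _ ≤ hammingDist _ _ + hammingDist _ _ := hammingDist_triangle _ _ _
    _ ≤ 1 + p.length := Nat.add_le_add (hamming_le_of_adj h) ih
    _ = (Walk.cons h p).length := by simp [Walk.length_cons]; omega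

lemma exists_geo_aux {n : ℕ} : ∀ (d : ℕ) (u v : Fin n → Bool), hammingDist u v = d →
    ∃ w : (hypercube n).Walk u v, w.length = d := by
  intro d
  induction d with
  | zero =>
    intro u v h
    obtain rfl := hammingDist_eq_zero.mp h
    exact ⟨Walk.nil, rfl⟩
  | succ d ih =>
    intro u v h
    have hpos : 0 < hammingDist u v := by omega
    obtain ⟨i, hi⟩ := Finset.card_pos.mp hpos
    simp only [hammingDist, Finset.mem_filter, Finset.mem_univ, true_and] at hi
    set u' := Function.update u i (v i) with hu'
    have hadj : (hypercube n).Adj u u' := by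
      rw [hypercube, SimpleGraph.fromRel_adj]
      refine ⟨?_, Or.inl ⟨i, ?_, ?_⟩⟩
      · intro he
        apply hi
        rw [he, hu', Function.update_self]
      · rw [hu', Function.update_self]; exact hi
      · intro j hj; rw [hu', Function.update_of_ne hj]
    have hcard : hammingDist u' v = d := by
      have hset : ({j | u' j ≠ v j} : Finset (Fin n)) = ({j | u j ≠ v j} : Finset (Fin n)).erase i := by
        ext j
        by_cases hji : j = i
        · subst hji
          simp [hu', Function.update_self]
        · simp [hu', Function.update_of_ne hji, hji]
      have := h
      simp only [hammingDist] at this ⊢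
      rw [hset, Finset.card_erase_of_mem]
      · omega
      · simp only [Finset.mem_filter, Finset.mem_univ, true_and]; exact hi
    obtain ⟨w, hw⟩ := ih u' v hcard
    exact ⟨Walk.cons hadj w, by simp [Walk.length_cons, hw]⟩

lemma dist_eq_hamming {n : ℕ} (u v : Fin n → Bool) :
    (hypercube n).dist u v = hammingDist u v := by
  obtain ⟨w, hw⟩ := exists_geo_aux (hammingDist u v) u v rfl
  refine le_antisymm (hw ▸ SimpleGraph.dist_le w) ?_
  obtain ⟨p, hp⟩ := (Walk.reachable w).exists_walk_length_eq_dist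
  exact hp ▸ hamming_le_walk p

abbrev V3 := Fin 3 → Bool
def a0 : V3 := ![false,false,false]
def a1 : V3 := ![true,true,true]
def a2 : V3 := ![false,true,true]
def a3 : V3 := ![true,false,false]

def w1 : (hypercube 3).Walk a0 a1 :=
  Walk.cons (v := ![false,false,true]) (by decide)
    (Walk.cons (v := ![true,false,true]) (by decide)
      (Walk.cons (by decide) Walk.nil))

def w2 : (hypercube 3).Walk a2 a3 :=
  Walk.cons (v := ![false,true,false]) (by decide)
    (Walk.cons (v := ![true,true,false]) (by decide)
      (Walk.cons (by decide) Walk.nil))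

lemma w1w2_cover : ∀ x : V3, x ∈ w1.support ∨ x ∈ w2.support := by decide

noncomputable def D (u v : V3) : (hypercube 3).Walk u v :=
  (exists_geo_aux (hammingDist u v) u v rfl).choose

lemma D_len (u v : V3) : (D u v).length = hammingDist u v :=
  (exists_geo_aux (hammingDist u v) u v rfl).choose_spec

def enc (u : V3) : ℕ := (cond (u 0) 1 0) + 2 * (cond (u 1) 1 0) + 4 * (cond (u 2) 1 0)

lemma enc_inj : ∀ u v : V3, enc u = enc v → u = v := by decide

noncomputable def Dsym (u v : V3) : (hypercube 3).Walk u v :=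
  if enc u ≤ enc v then D u v else (D v u).reverse

lemma Dsym_len (u v : V3) : (Dsym u v).length = hammingDist u v := by
  rw [Dsym]
  split
  · exact D_len u v
  · rw [Walk.length_reverse, D_len, hammingDist_comm]

lemma Dsym_rev (u v : V3) : Dsym u v = (Dsym v u).reverse := by
  rw [Dsym, Dsym]
  by_cases h1 : enc u ≤ enc v <;> by_cases h2 : enc v ≤ enc u
  · obtain rfl := enc_inj u v (le_antisymm h1 h2)
    simp only [if_pos h1]
    have h0 : (D u u).length = 0 := by rw [D_len, hammingDist_self]
    have : (D u u).Nil := Walk.nil_iff_length_eq.mpr h0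
    rw [this.eq_nil]
    rfl
  · rw [if_pos h1, if_neg h2, Walk.reverse_reverse]
  · rw [if_neg h1, if_pos h2]
  · omega

noncomputable def W (u v : V3) : (hypercube 3).Walk u v :=
  if h : u = a0 ∧ v = a1 then w1.copy h.1.symm h.2.symm
  else if h : u = a1 ∧ v = a0 then w1.reverse.copy h.1.symm h.2.symm
  else if h : u = a2 ∧ v = a3 then w2.copy h.1.symm h.2.symm
  else if h : u = a3 ∧ v = a2 then w2.reverse.copy h.1.symm h.2.symm
  else Dsym u v

lemma W_eq1 : W a0 a1 = w1.copy rfl rfl := by rw [W, dif_pos ⟨rfl, rfl⟩]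
lemma W_eq1' : W a1 a0 = w1.reverse.copy rfl rfl := by
  rw [W, dif_neg (by decide), dif_pos ⟨rfl, rfl⟩]
lemma W_eq2 : W a2 a3 = w2.copy rfl rfl := by
  rw [W, dif_neg (by decide), dif_neg (by decide), dif_pos ⟨rfl, rfl⟩]
lemma W_eq2' : W a3 a2 = w2.reverse.copy rfl rfl := by
  rw [W, dif_neg (by decide), dif_neg (by decide), dif_neg (by decide), dif_pos ⟨rfl, rfl⟩]

lemma W_generic {u v : V3} (h : ¬((u = a0 ∧ v = a1) ∨ (u = a1 ∧ v = a0) ∨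
    (u = a2 ∧ v = a3) ∨ (u = a3 ∧ v = a2))) : W u v = Dsym u v := by
  rw [W, dif_neg (by tauto), dif_neg (by tauto), dif_neg (by tauto), dif_neg (by tauto)]

lemma W_len (u v : V3) : (W u v).length = (hypercube 3).dist u v := by
  rw [dist_eq_hamming]
  by_cases h : (u = a0 ∧ v = a1) ∨ (u = a1 ∧ v = a0) ∨ (u = a2 ∧ v = a3) ∨ (u = a3 ∧ v = a2)
  · rcases h with ⟨rfl, rfl⟩ | ⟨rfl, rfl⟩ | ⟨rfl, rfl⟩ | ⟨rfl, rfl⟩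
    · rw [W_eq1]; decide
    · rw [W_eq1']; decide
    · rw [W_eq2]; decide
    · rw [W_eq2']; decide
  · rw [W_generic h, Dsym_len]

lemma W_rev (u v : V3) : W u v = (W v u).reverse := by
  by_cases h : (u = a0 ∧ v = a1) ∨ (u = a1 ∧ v = a0) ∨ (u = a2 ∧ v = a3) ∨ (u = a3 ∧ v = a2)
  · rcases h with ⟨rfl, rfl⟩ | ⟨rfl, rfl⟩ | ⟨rfl, rfl⟩ | ⟨rfl, rfl⟩
    · rw [W_eq1, W_eq1']; simp
    · rw [W_eq1, W_eq1']; simp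
    · rw [W_eq2, W_eq2']; simp
    · rw [W_eq2, W_eq2']; simp
  · have h' : ¬((v = a0 ∧ u = a1) ∨ (v = a1 ∧ u = a0) ∨ (v = a2 ∧ u = a3) ∨ (v = a3 ∧ u = a2)) := by
      tauto
    rw [W_generic h, W_generic h', Dsym_rev]

def S4 : Finset V3 := {a0, a1, a2, a3}

lemma S4_sgs : IsStrongGeodeticSet (hypercube 3) ↑S4 := by
  refine ⟨fun u _ v _ => W u v, fun u _ v _ => W_len u v, fun u _ v _ => W_rev u v, ?_⟩
  intro x
  rcases w1w2_cover x with h | h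
  · exact ⟨a0, by simp [S4], a1, by simp [S4], by show x ∈ (W a0 a1).support; rw [W_eq1]; simpa using h⟩
  · exact ⟨a2, by simp [S4], a3, by simp [S4], by show x ∈ (W a2 a3).support; rw [W_eq2]; simpa using h⟩

lemma key3 : ∀ a b c : V3, a ≠ b → a ≠ c → b ≠ c →
    hammingDist a b + hammingDist a c + hammingDist b c ≤ 7 := by decide

lemma hd_le3 : ∀ a b : V3, hammingDist a b ≤ 3 := by decide

lemma supp_card {u v : V3} (w : (hypercube 3).Walk u v)
    (hw : w.length = (hypercube 3).dist u v) :
    w.support.toFinset.card ≤ hammingDist u v + 1 := by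
  calc w.support.toFinset.card ≤ w.support.length := List.toFinset_card_le _
  _ = w.length + 1 := Walk.length_support w
  _ = hammingDist u v + 1 := by rw [hw, dist_eq_hamming]

lemma lower_bound (k : ℕ) (S : Finset V3) (hk : S.card = k)
    (hsgs : IsStrongGeodeticSet (hypercube 3) ↑S) : 4 ≤ k := by
  obtain ⟨γ, hlen, hrev, hcov⟩ := hsgs
  by_contra hlt
  push_neg at hlt
  have memconv : ∀ u (hu : u ∈ (↑S : Set V3)) v (hv : v ∈ (↑S : Set V3)) u'
      (hu' : u' ∈ (↑S : Set V3)) v' (hv' : v' ∈ (↑S : Set V3)), u = u' → v = v' →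
      ∀ x, x ∈ (γ u hu v hv).support → x ∈ (γ u' hu' v' hv').support := by
    intro u hu v hv u' hu' v' hv' h1 h2 x hx
    subst h1; subst h2
    exact hx
  have diag : ∀ u (hu : u ∈ (↑S : Set V3)) x, x ∈ (γ u hu u hu).support → x = u := by
    intro u hu x hx
    have h0 : (γ u hu u hu).length = 0 := by rw [hlen, SimpleGraph.dist_self]
    rw [(Walk.nil_iff_length_eq.mpr h0).eq_nil] at hx
    simpa using hx
  have revmem : ∀ u (hu : u ∈ (↑S : Set V3)) v (hv : v ∈ (↑S : Set V3)) x,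
      x ∈ (γ u hu v hv).support → x ∈ (γ v hv u hu).support := by
    intro u hu v hv x hx
    rw [hrev v hv u hu, Walk.support_reverse, List.mem_reverse]
    exact hx
  interval_cases k
  · obtain rfl := Finset.card_eq_zero.mp hk
    obtain ⟨u, hu, -⟩ := hcov a0
    simp at hu
  · obtain ⟨a, rfl⟩ := Finset.card_eq_one.mp hk
    have ha : a ∈ (↑({a} : Finset V3) : Set V3) := by simp
    have hall : ∀ x : V3, x = a := by
      intro x
      obtain ⟨u, hu, v, hv, hx⟩ := hcov x
      have hu' : u = a := by simpa using hu
      have hv' : v = a := by simpa using hv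
      exact diag a ha x (memconv u hu v hv a ha a ha hu' hv' x hx)
    exact absurd ((hall a0).trans (hall a1).symm) (by decide)
  · obtain ⟨a, b, hab, rfl⟩ := Finset.card_eq_two.mp hk
    have ha : a ∈ (↑({a, b} : Finset V3) : Set V3) := by simp
    have hb : b ∈ (↑({a, b} : Finset V3) : Set V3) := by simp
    set A := (γ a ha b hb).support.toFinset with hA
    have haA : a ∈ A := List.mem_toFinset.mpr (Walk.start_mem_support _)
    have hbA : b ∈ A := List.mem_toFinset.mpr (Walk.end_mem_support _)
    have hsub : ∀ x : V3, x ∈ A := by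
      intro x
      obtain ⟨u, hu, v, hv, hx⟩ := hcov x
      have hu' : u = a ∨ u = b := by simpa using hu
      have hv' : v = a ∨ v = b := by simpa using hv
      rcases hu' with hu' | hu' <;> rcases hv' with hv' | hv'
      · rw [diag a ha x (memconv u hu v hv a ha a ha hu' hv' x hx)]; exact haA
      · exact List.mem_toFinset.mpr (memconv u hu v hv a ha b hb hu' hv' x hx)
      · exact List.mem_toFinset.mpr (revmem b hb a ha x
          (memconv u hu v hv b hb a ha hu' hv' x hx))
      · rw [diag b hb x (memconv u hu v hv b hb b hb hu' hv' x hx)]; exact hbA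
    have h8 : (8 : ℕ) ≤ A.card := by
      have hU : (Finset.univ : Finset V3) ⊆ A := fun x _ => hsub x
      have hc8 := Finset.card_le_card hU
      have : (Finset.univ : Finset V3).card = 8 := by decide
      omega
    have hAle : A.card ≤ hammingDist a b + 1 := supp_card _ (hlen a ha b hb)
    have := hd_le3 a b
    omega
  · obtain ⟨a, b, c, hab, hac, hbc, rfl⟩ := Finset.card_eq_three.mp hk
    have ha : a ∈ (↑({a, b, c} : Finset V3) : Set V3) := by simp
    have hb : b ∈ (↑({a, b, c} : Finset V3) : Set V3) := by simp
    have hc : c ∈ (↑({a, b, c} : Finset V3) : Set V3) := by simp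
    set A := (γ a ha b hb).support.toFinset with hAdef
    set B := (γ a ha c hc).support.toFinset with hBdef
    set C := (γ b hb c hc).support.toFinset with hCdef
    have haA : a ∈ A := List.mem_toFinset.mpr (Walk.start_mem_support _)
    have hbA : b ∈ A := List.mem_toFinset.mpr (Walk.end_mem_support _)
    have haB : a ∈ B := List.mem_toFinset.mpr (Walk.start_mem_support _)
    have hcB : c ∈ B := List.mem_toFinset.mpr (Walk.end_mem_support _)
    have hbC : b ∈ C := List.mem_toFinset.mpr (Walk.start_mem_support _)
    have hcC : c ∈ C := List.mem_toFinset.mpr (Walk.end_mem_support _)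
    have hsub : ∀ x : V3, x ∈ A ∪ B ∪ C := by
      intro x
      obtain ⟨u, hu, v, hv, hx⟩ := hcov x
      have hu' : u = a ∨ u = b ∨ u = c := by simpa using hu
      have hv' : v = a ∨ v = b ∨ v = c := by simpa using hv
      simp only [Finset.mem_union]
      rcases hu' with hu' | hu' | hu' <;> rcases hv' with hv' | hv' | hv'
      · exact Or.inl (Or.inl ((diag a ha x (memconv u hu v hv a ha a ha hu' hv' x hx)) ▸ haA))
      · exact Or.inl (Or.inl (List.mem_toFinset.mpr (memconv u hu v hv a ha b hb hu' hv' x hx)))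
      · exact Or.inl (Or.inr (List.mem_toFinset.mpr (memconv u hu v hv a ha c hc hu' hv' x hx)))
      · exact Or.inl (Or.inl (List.mem_toFinset.mpr (revmem b hb a ha x
          (memconv u hu v hv b hb a ha hu' hv' x hx))))
      · exact Or.inl (Or.inl ((diag b hb x (memconv u hu v hv b hb b hb hu' hv' x hx)) ▸ hbA))
      · exact Or.inr (List.mem_toFinset.mpr (memconv u hu v hv b hb c hc hu' hv' x hx))
      · exact Or.inl (Or.inr (List.mem_toFinset.mpr (revmem c hc a ha x
          (memconv u hu v hv c hc a ha hu' hv' x hx))))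
      · exact Or.inr (List.mem_toFinset.mpr (revmem c hc b hb x
          (memconv u hu v hv c hc b hb hu' hv' x hx)))
      · exact Or.inl (Or.inr ((diag c hc x (memconv u hu v hv c hc c hc hu' hv' x hx)) ▸ hcB))
    have hsub2 : A ∪ B ∪ C ⊆ A ∪ B.erase a ∪ (C.erase c).erase b := by
      intro x hx
      simp only [Finset.mem_union] at hx ⊢
      rcases hx with (hx | hx) | hx
      · exact Or.inl (Or.inl hx)
      · by_cases hxa : x = a
        · exact Or.inl (Or.inl (hxa ▸ haA))
        · exact Or.inl (Or.inr (Finset.mem_erase.mpr ⟨hxa, hx⟩))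
      · by_cases hxb : x = b
        · exact Or.inl (Or.inl (hxb ▸ hbA))
        · by_cases hxc : x = c
          · subst hxc
            exact Or.inl (Or.inr (Finset.mem_erase.mpr ⟨fun h => hac h.symm, hcB⟩))
          · exact Or.inr (Finset.mem_erase.mpr ⟨hxb, Finset.mem_erase.mpr ⟨hxc, hx⟩⟩)
    have h8 : (8 : ℕ) ≤ (A ∪ B.erase a ∪ (C.erase c).erase b).card := by
      have hU : (Finset.univ : Finset V3) ⊆ A ∪ B.erase a ∪ (C.erase c).erase b :=
        fun x _ => hsub2 (hsub x)
      have hc8 := Finset.card_le_card hU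
      have : (Finset.univ : Finset V3).card = 8 := by decide
      omega
    have hle : (A ∪ B.erase a ∪ (C.erase c).erase b).card ≤
        A.card + (B.erase a).card + ((C.erase c).erase b).card :=
      le_trans (Finset.card_union_le _ _)
        (Nat.add_le_add_right (Finset.card_union_le _ _) _)
    have hAle : A.card ≤ hammingDist a b + 1 := supp_card _ (hlen a ha b hb)
    have hBle : B.card ≤ hammingDist a c + 1 := supp_card _ (hlen a ha c hc)
    have hCle : C.card ≤ hammingDist b c + 1 := supp_card _ (hlen b hb c hc)
    have hBe : (B.erase a).card = B.card - 1 := Finset.card_erase_of_mem haB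
    have hCe1 : (C.erase c).card = C.card - 1 := Finset.card_erase_of_mem hcC
    have hCe2 : ((C.erase c).erase b).card = (C.erase c).card - 1 :=
      Finset.card_erase_of_mem (Finset.mem_erase.mpr ⟨hbc, hbC⟩)
    have hkey := key3 a b c hab hac hbc
    have hpos : 0 < hammingDist b c := hammingDist_pos.mpr hbc
    omega


/-- The strong geodetic number of the 3-dimensional hypercube `Q₃` equals 4. -/
theorem sg_hypercube_three : strongGeodeticNumber (hypercube 3) = 4 := by
  have h4 : 4 ∈ {k | ∃ S : Finset V3, S.card = k ∧ IsStrongGeodeticSet (hypercube 3) ↑S} :=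
    ⟨S4, by decide, S4_sgs⟩
  rw [strongGeodeticNumber]
  refine le_antisymm (Nat.sInf_le h4) (le_csInf ⟨4, h4⟩ ?_)
  rintro k ⟨S, hk, hsgs⟩
  exact lower_bound k S hk hsgs
end

section
/- For every integer n ≥ 2, the strong geodetic number of the hypercube Q_n satisfies sg(Q_n) ≥ ⌈2^((n+1)/2) / √(n-1)⌉, where 2^((n+1)/2) denotes the real power. -/
open SimpleGraph

lemma hypercube_walk (n : ℕ) : ∀ (m : ℕ) (x y : Fin n → Bool),
    (Finset.univ.filter fun i => x i ≠ y i).card = m →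
    ∃ w : (hypercube n).Walk x y, w.length = m := by
  intro m
  induction m with
  | zero =>
    intro x y h
    have hxy : x = y := by
      funext i
      by_contra hi
      have : i ∈ Finset.univ.filter fun i => x i ≠ y i := by simp [hi]
      rw [Finset.card_eq_zero] at h
      simp [h] at this
    subst hxy
    exact ⟨Walk.nil, rfl⟩
  | succ m ih =>
    intro x y h
    have hpos : 0 < (Finset.univ.filter fun i => x i ≠ y i).card := by omega
    obtain ⟨i, hi⟩ := Finset.card_pos.mp hpos
    simp only [Finset.mem_filter, Finset.mem_univ, true_and] at hi
    set x' := Function.update x i (y i) with hx'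
    have hadj : (hypercube n).Adj x x' := by
      refine ⟨fun hxx => ?_, Or.inl ⟨i, by simp [hx', Function.update_self, hi],
        fun j hj => by simp [hx', Function.update_of_ne hj]⟩⟩
      have := congrFun hxx i
      simp [hx', Function.update_self] at this
      exact hi this
    have hcard : (Finset.univ.filter fun j => x' j ≠ y j).card = m := by
      have : (Finset.univ.filter fun j => x' j ≠ y j)
          = (Finset.univ.filter fun j => x j ≠ y j).erase i := by
        ext j
        simp only [Finset.mem_filter, Finset.mem_univ, true_and, Finset.mem_erase]
        constructor
        · intro hj
          rcases eq_or_ne j i with rfl | hji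
          · simp [hx', Function.update_self] at hj
          · exact ⟨hji, by rwa [hx', Function.update_of_ne hji] at hj⟩
        · rintro ⟨hji, hj⟩
          rwa [hx', Function.update_of_ne hji]
      rw [this, Finset.card_erase_of_mem (by simp [hi]), h]
      omega
    obtain ⟨w, hw⟩ := ih x' y hcard
    exact ⟨Walk.cons hadj w, by simp [hw]⟩

lemma hypercube_reachable (n : ℕ) (u v : Fin n → Bool) : (hypercube n).Reachable u v :=
  ⟨(hypercube_walk n _ u v rfl).choose⟩

lemma hypercube_dist_le (n : ℕ) (u v : Fin n → Bool) : (hypercube n).dist u v ≤ n := by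
  obtain ⟨w, hw⟩ := hypercube_walk n _ u v rfl
  refine (SimpleGraph.dist_le w).trans ?_
  rw [hw]
  exact (Finset.card_filter_le _ _).trans (by simp)

lemma walk_eq_reverse_of_length_zero {V : Type*} {G : SimpleGraph V} {u : V}
    (p : G.Walk u u) (h : p.length = 0) : p.reverse = p := by
  rw [(Walk.nil_iff_length_eq.mpr h).eq_nil]
  rfl

lemma support_of_length_zero {V : Type*} {G : SimpleGraph V} {u v : V}
    (p : G.Walk u v) (h : p.length = 0) : p.support = [u] :=
  Walk.nil_iff_support_eq.mp (Walk.nil_iff_length_eq.mpr h)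

lemma hypercube_sgs_exists (n : ℕ) :
    IsStrongGeodeticSet (hypercube n) ↑(Finset.univ : Finset (Fin n → Bool)) := by
  classical
  set e := Fintype.equivFin (Fin n → Bool) with he
  have hd : ∀ u v : Fin n → Bool,
      ∃ w : (hypercube n).Walk u v, w.length = (hypercube n).dist u v :=
    fun u v => (hypercube_reachable n u v).exists_walk_length_eq_dist
  choose d hdlen using hd
  refine ⟨fun u _ v _ => if h : e u ≤ e v then d u v else (d v u).reverse, ?_, ?_, ?_⟩
  · intro u hu v hv
    by_cases h : e u ≤ e v
    · simp [h, hdlen]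
    · simp only [h, dite_false, Walk.length_reverse, hdlen]
      exact ((hypercube n).dist_comm : _ = _)
  · intro u hu v hv
    by_cases h : e u ≤ e v
    · by_cases h' : e v ≤ e u
      · have huv : u = v := e.injective (le_antisymm h h')
        subst huv
        simp only [le_refl, dite_true]
        exact (walk_eq_reverse_of_length_zero (d u u)
          (by rw [hdlen]; exact (hypercube n).dist_self)).symm
      · simp [h, h', Walk.reverse_reverse]
    · have h' : e v ≤ e u := le_of_not_ge h
      simp [h, h']
  · intro x
    refine ⟨x, by simp, x, by simp, ?_⟩
    simp only [le_refl, dite_true]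
    exact Walk.start_mem_support _

lemma hypercube_counting (n : ℕ) (S : Finset (Fin n → Bool))
    (hS : IsStrongGeodeticSet (hypercube n) ↑S) :
    2 ^ (n + 1) ≤ 2 * S.card + S.card * (S.card - 1) * (n - 1) := by
  classical
  set e := Fintype.equivFin (Fin n → Bool) with he
  obtain ⟨γ, hlen, hsym, hcov⟩ := hS
  set T : Finset ((Fin n → Bool) × (Fin n → Bool)) :=
    (S ×ˢ S).filter fun p => e p.1 < e p.2 with hT
  set F : (Fin n → Bool) × (Fin n → Bool) → Finset (Fin n → Bool) := fun p =>
    if h : p.1 ∈ S ∧ p.2 ∈ S then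
      ((γ p.1 (Finset.mem_coe.mpr h.1) p.2 (Finset.mem_coe.mpr h.2)).support.toFinset
        \ {p.1, p.2})
    else ∅ with hF
  have hsub : (Finset.univ : Finset (Fin n → Bool)) ⊆ S ∪ T.biUnion F := by
    intro x _
    by_cases hxS : x ∈ S
    · exact Finset.mem_union_left _ hxS
    obtain ⟨u, hu, v, hv, hx⟩ := hcov x
    have huS : u ∈ S := Finset.mem_coe.mp hu
    have hvS : v ∈ S := Finset.mem_coe.mp hv
    have hxu : x ≠ u := fun h => hxS (h ▸ huS)
    have hxv : x ≠ v := fun h => hxS (h ▸ hvS)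
    have huv : u ≠ v := by
      rintro rfl
      have h0 : (γ u hu u hv).length = 0 := by
        rw [hlen]; exact (hypercube n).dist_self
      rw [support_of_length_zero _ h0] at hx
      simp at hx
      exact hxu hx
    refine Finset.mem_union_right _ (Finset.mem_biUnion.mpr ?_)
    have henuv : e u ≠ e v := fun h => huv (e.injective h)
    rcases lt_or_gt_of_ne henuv with hlt | hlt
    · refine ⟨(u, v), by simp [hT, huS, hvS, hlt], ?_⟩
      rw [hF]
      simp only
      rw [dif_pos ⟨huS, hvS⟩]
      rw [Finset.mem_sdiff]
      exact ⟨List.mem_toFinset.mpr hx, by simp [hxu, hxv]⟩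
    · refine ⟨(v, u), by simp [hT, huS, hvS, hlt], ?_⟩
      rw [hF]
      simp only
      rw [dif_pos ⟨hvS, huS⟩]
      rw [Finset.mem_sdiff]
      have hx' : x ∈ (γ v hv u hu).support := by
        rw [hsym u hu v hv, Walk.support_reverse, List.mem_reverse] at hx
        exact hx
      exact ⟨List.mem_toFinset.mpr hx', by simp [hxu, hxv]⟩
  have hFcard : ∀ p ∈ T, (F p).card ≤ n - 1 := by
    intro p hp
    rw [hT, Finset.mem_filter, Finset.mem_product] at hp
    obtain ⟨⟨h1, h2⟩, hlt⟩ := hp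
    rw [hF]
    simp only
    rw [dif_pos ⟨h1, h2⟩]
    set w := γ p.1 (Finset.mem_coe.mpr h1) p.2 (Finset.mem_coe.mpr h2) with hw
    have hpair : ({p.1, p.2} : Finset (Fin n → Bool)) ⊆ w.support.toFinset := by
      intro z hz
      rw [Finset.mem_insert, Finset.mem_singleton] at hz
      rcases hz with rfl | rfl
      · exact List.mem_toFinset.mpr w.start_mem_support
      · exact List.mem_toFinset.mpr w.end_mem_support
    rw [Finset.card_sdiff_of_subset hpair, Finset.card_pair (fun h => absurd (congrArg e h) (ne_of_lt hlt))]
    have hsl : w.support.toFinset.card ≤ n + 1 := by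
      refine (List.toFinset_card_le _).trans ?_
      rw [Walk.length_support, hw, hlen]
      exact add_le_add_left (hypercube_dist_le n _ _) 1
    omega
  have hcount : 2 ^ n ≤ S.card + T.card * (n - 1) := by
    have h1 : (Finset.univ : Finset (Fin n → Bool)).card = 2 ^ n := by
      simp [Finset.card_univ]
    calc 2 ^ n = (Finset.univ : Finset (Fin n → Bool)).card := h1.symm
      _ ≤ (S ∪ T.biUnion F).card := Finset.card_le_card hsub
      _ ≤ S.card + (T.biUnion F).card := Finset.card_union_le _ _
      _ ≤ S.card + ∑ p ∈ T, (F p).card :=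
          Nat.add_le_add_left (Finset.card_biUnion_le) _
      _ ≤ S.card + ∑ _p ∈ T, (n - 1) :=
          Nat.add_le_add_left (Finset.sum_le_sum hFcard) _
      _ = S.card + T.card * (n - 1) := by rw [Finset.sum_const, smul_eq_mul]
  have hTcard : 2 * T.card ≤ S.card * (S.card - 1) := by
    set T' : Finset ((Fin n → Bool) × (Fin n → Bool)) := T.map ⟨Prod.swap, Prod.swap_injective⟩ with hT'
    have hdisj : Disjoint T T' := by
      rw [Finset.disjoint_left]
      intro p hp hp'
      rw [hT', Finset.mem_map] at hp'
      obtain ⟨q, hq, hqe⟩ := hp'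
      rw [hT, Finset.mem_filter] at hp hq
      have h1 : q.2 = p.1 := congrArg Prod.fst hqe
      have h2 : q.1 = p.2 := congrArg Prod.snd hqe
      have := hq.2
      rw [h1, h2] at this
      exact absurd hp.2 (asymm this)
    have hunion : T ∪ T' ⊆ S.offDiag := by
      intro p hp
      rw [Finset.mem_union] at hp
      rw [Finset.mem_offDiag]
      rcases hp with hp | hp
      · rw [hT, Finset.mem_filter, Finset.mem_product] at hp
        exact ⟨hp.1.1, hp.1.2, fun h => absurd (congrArg e h) (ne_of_lt hp.2)⟩
      · rw [hT', Finset.mem_map] at hp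
        obtain ⟨q, hq, hqe⟩ := hp
        rw [hT, Finset.mem_filter, Finset.mem_product] at hq
        have h1 : q.2 = p.1 := congrArg Prod.fst hqe
        have h2 : q.1 = p.2 := congrArg Prod.snd hqe
        exact ⟨h1 ▸ hq.1.2, h2 ▸ hq.1.1, by rw [← h1, ← h2]; exact fun h => absurd (congrArg e h.symm) (ne_of_lt hq.2)⟩
    have hcards : T.card + T'.card ≤ S.offDiag.card := by
      rw [← Finset.card_union_of_disjoint hdisj]
      exact Finset.card_le_card hunion
    rw [Finset.card_map] at hcards
    rw [Finset.offDiag_card] at hcards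
    have : S.card * S.card - S.card = S.card * (S.card - 1) := by
      cases S.card with
      | zero => simp
      | succ m => rw [Nat.succ_sub_one]; ring_nf; omega
    omega
  have h2 : 2 * T.card * (n - 1) ≤ S.card * (S.card - 1) * (n - 1) :=
    Nat.mul_le_mul_right _ hTcard
  calc 2 ^ (n + 1) = 2 * 2 ^ n := by ring
    _ ≤ 2 * (S.card + T.card * (n - 1)) := Nat.mul_le_mul_left _ hcount
    _ = 2 * S.card + 2 * T.card * (n - 1) := by ring
    _ ≤ 2 * S.card + S.card * (S.card - 1) * (n - 1) := Nat.add_le_add_left h2 _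

/-- Corollary 4.1: for `n ≥ 2`, `sg(Qₙ) ≥ ⌈2^((n+1)/2) / √(n-1)⌉`. -/
theorem sg_hypercube_lower (n : ℕ) (hn : 2 ≤ n) :
    ⌈(2 : ℝ) ^ (((n : ℝ) + 1) / 2) / Real.sqrt ((n : ℝ) - 1)⌉ ≤
      (strongGeodeticNumber (hypercube n) : ℤ) := by
  classical
  have hne : {m | ∃ S : Finset (Fin n → Bool), S.card = m ∧
      IsStrongGeodeticSet (hypercube n) ↑S}.Nonempty :=
    ⟨(Finset.univ : Finset (Fin n → Bool)).card, Finset.univ, rfl, hypercube_sgs_exists n⟩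
  obtain ⟨S, hScard, hSgs⟩ := Nat.sInf_mem hne
  have hk : strongGeodeticNumber (hypercube n) = S.card := hScard.symm
  rw [hk]
  have H : 2 ^ (n + 1) ≤ 2 * S.card + S.card * (S.card - 1) * (n - 1) :=
    hypercube_counting n S hSgs
  have h1n : 1 ≤ n := by omega
  have hk1 : 1 ≤ S.card := by
    by_contra hc
    push_neg at hc
    have hc0 : S.card = 0 := by omega
    rw [hc0] at H
    simp at H
  have H2 : 2 ^ (n + 1) ≤ S.card ^ 2 * (n - 1) := by
    by_cases h2 : n = 2
    · subst h2
      norm_num at H ⊢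
      have h3 : 3 ≤ S.card := by
        by_contra hc
        push_neg at hc
        interval_cases hS : S.card <;> omega
      nlinarith
    · have h3 : 3 ≤ n := by omega
      zify [hk1, h1n] at H ⊢
      nlinarith [H, mul_nonneg (by positivity : (0:ℤ) ≤ (S.card : ℤ))
        (by push_cast; omega : (0:ℤ) ≤ (n : ℤ) - 3)]
  -- pass to the reals
  rw [Int.ceil_le]
  push_cast
  have hn2 : (2 : ℝ) ≤ (n : ℝ) := by exact_mod_cast hn
  have hs : 0 < Real.sqrt ((n : ℝ) - 1) := Real.sqrt_pos.mpr (by linarith)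
  rw [div_le_iff₀ hs]
  have hcast : (2 : ℝ) ^ (n + 1) ≤ ((S.card : ℝ)) ^ 2 * ((n : ℝ) - 1) := by
    calc (2 : ℝ) ^ (n + 1) = ((2 ^ (n + 1) : ℕ) : ℝ) := by push_cast; ring
      _ ≤ ((S.card ^ 2 * (n - 1) : ℕ) : ℝ) := Nat.cast_le.mpr H2
      _ = ((S.card : ℝ)) ^ 2 * ((n : ℝ) - 1) := by
          push_cast [Nat.cast_sub h1n]; ring
  have ha : (0 : ℝ) ≤ (2 : ℝ) ^ (((n : ℝ) + 1) / 2) := Real.rpow_nonneg (by norm_num) _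
  have hb : (0 : ℝ) ≤ (S.card : ℝ) * Real.sqrt ((n : ℝ) - 1) := by positivity
  have hsq : ((2 : ℝ) ^ (((n : ℝ) + 1) / 2)) ^ 2
      ≤ ((S.card : ℝ) * Real.sqrt ((n : ℝ) - 1)) ^ 2 := by
    have e1 : ((2 : ℝ) ^ (((n : ℝ) + 1) / 2)) ^ 2 = (2 : ℝ) ^ (n + 1) := by
      rw [← Real.rpow_natCast ((2 : ℝ) ^ (((n : ℝ) + 1) / 2)) 2,
        ← Real.rpow_mul (by norm_num : (0:ℝ) ≤ 2),
        ← Real.rpow_natCast (2 : ℝ) (n + 1)]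
      congr 1
      push_cast
      ring
    have e2 : ((S.card : ℝ) * Real.sqrt ((n : ℝ) - 1)) ^ 2
        = ((S.card : ℝ)) ^ 2 * ((n : ℝ) - 1) := by
      rw [mul_pow, Real.sq_sqrt (by linarith)]
    rw [e1, e2]
    exact hcast
  calc (2 : ℝ) ^ (((n : ℝ) + 1) / 2)
      = Real.sqrt (((2 : ℝ) ^ (((n : ℝ) + 1) / 2)) ^ 2) := (Real.sqrt_sq ha).symm
    _ ≤ Real.sqrt (((S.card : ℝ) * Real.sqrt ((n : ℝ) - 1)) ^ 2) := Real.sqrt_le_sqrt hsq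
    _ = (S.card : ℝ) * Real.sqrt ((n : ℝ) - 1) := Real.sqrt_sq hb
end
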